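/- arXiv:math/0411081 — 10 statements merged into one kernel-verified Lean document; each statement's English description precedes it below -/
import Mathlib

section
/- Let R > 0, let f be holomorphic on the disk {z ∈ ℂ : |z| < R} with f(0) = 0 and f′(0) ≠ 0, and let m ∈ ℂ with m ≠ 0. Then there exist ε > 0 with max(1,|m|)·ε < R and δ > 0 such that: f′ has no zero on {|z| ≤ ε}, f has no zero on {0 < |z| ≤ ε}, for every t ∈ ℂ with 0 < |t| < δ there is a unique point g(t) with |g(t)| < ε and f(g(t)) = t, and the series ∑_{n=1}^∞ tⁿ · (1/(2πi)) ∮_{|z|=ε} f(mz)/f(z)^{n+1} dz converges with sum equal to f(m·g(t))/f′(g(t)). -/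
open Complex Metric
open Filter Topology

/-- Lemma 2.5 (single factor case): for `f` holomorphic near `0` with `f 0 = 0`,
`f' 0 ≠ 0` and `m ≠ 0`, the generating series of the residues
`Res_z f(mz)/f(z)^{n+1}` equals `f(m g(t))/f'(g(t))`, where `g` is the local
inverse of `f`. -/
theorem elliptic_genera_residue_lemma
    (R : ℝ) (hR : 0 < R) (f : ℂ → ℂ)
    (hf : DifferentiableOn ℂ f (ball (0 : ℂ) R))
    (hf0 : f 0 = 0) (hf'0 : deriv f 0 ≠ 0) (m : ℂ) (hm : m ≠ 0) :
    ∃ ε > (0 : ℝ), max 1 ‖m‖ * ε < R ∧ ∃ δ > (0 : ℝ),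
      (∀ z : ℂ, ‖z‖ ≤ ε → deriv f z ≠ 0) ∧
      (∀ z : ℂ, z ≠ 0 → ‖z‖ ≤ ε → f z ≠ 0) ∧
      ∀ t : ℂ, 0 < ‖t‖ → ‖t‖ < δ →
        ∃ g : ℂ, (‖g‖ < ε ∧ f g = t) ∧
          (∀ z : ℂ, ‖z‖ < ε → f z = t → z = g) ∧
          HasSum
            (fun n : ℕ =>
              t ^ (n + 1) *
                ((2 * (Real.pi : ℂ) * I)⁻¹ *
                  ∮ z in C(0, ε), f (m * z) / (f z) ^ (n + 2)))
            (f (m * g) / deriv f g) := by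
  have hfa : AnalyticOnNhd ℂ f (ball 0 R) := hf.analyticOnNhd isOpen_ball
  have h0R : (0:ℂ) ∈ ball (0:ℂ) R := by simp [hR]
  have hsd : HasStrictDerivAt f (deriv f 0) 0 := by
    obtain ⟨p, hp⟩ := hfa 0 h0R
    rw [hp.deriv]; exact hp.hasStrictDerivAt
  set Φ := (hsd.hasStrictFDerivAt_equiv hf'0).toOpenPartialHomeomorph f with hΦ
  have hΦcoe : (Φ : ℂ → ℂ) = f := rfl
  have h0src : (0:ℂ) ∈ Φ.source :=
    (hsd.hasStrictFDerivAt_equiv hf'0).mem_toOpenPartialHomeomorph_source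
  have hdercont : ContinuousAt (deriv f) 0 :=
    ((hfa.deriv).continuousOn.continuousAt (isOpen_ball.mem_nhds h0R))
  have hS : Φ.source ∩ (ball 0 R ∩ {z | deriv f z ≠ 0}) ∈ 𝓝 (0:ℂ) := by
    refine inter_mem (Φ.open_source.mem_nhds h0src) (inter_mem (isOpen_ball.mem_nhds h0R) ?_)
    exact hdercont.eventually_ne hf'0
  obtain ⟨r, hr, hrS⟩ := Metric.mem_nhds_iff.1 hS
  have hmax : (1:ℝ) ≤ max 1 ‖m‖ := le_max_left _ _
  have hmaxpos : (0:ℝ) < max 1 ‖m‖ := lt_of_lt_of_le one_pos hmax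
  set ε : ℝ := min (r/2) (R/(2 * max 1 ‖m‖)) with hεdef
  have hε : 0 < ε := lt_min (by linarith) (by positivity)
  have hεr : ε < r := lt_of_le_of_lt (min_le_left _ _) (by linarith)
  have hεsub : closedBall (0:ℂ) ε ⊆ Φ.source ∩ (ball 0 R ∩ {z | deriv f z ≠ 0}) := by
    intro z hz
    exact hrS (mem_ball_zero_iff.2 (lt_of_le_of_lt (mem_closedBall_zero_iff.1 hz) hεr))
  have hεR : max 1 ‖m‖ * ε < R := by
    calc max 1 ‖m‖ * ε ≤ max 1 ‖m‖ * (R/(2 * max 1 ‖m‖)) :=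
          mul_le_mul_of_nonneg_left (min_le_right _ _) hmaxpos.le
      _ = R/2 := by field_simp
      _ < R := by linarith
  have hεlt : ε < R := lt_of_le_of_lt (le_mul_of_one_le_left hε.le hmax) hεR
  have hsrc : ∀ z : ℂ, ‖z‖ ≤ ε → z ∈ Φ.source := fun z hz =>
    (hεsub (mem_closedBall_zero_iff.2 hz)).1
  have hderiv : ∀ z : ℂ, ‖z‖ ≤ ε → deriv f z ≠ 0 := fun z hz =>
    (hεsub (mem_closedBall_zero_iff.2 hz)).2.2
  have hinj : Set.InjOn f Φ.source := by have := Φ.injOn; rwa [hΦcoe] at this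
  have hfz : ∀ z : ℂ, z ≠ 0 → ‖z‖ ≤ ε → f z ≠ 0 := by
    intro z hz0 hzε hfz0
    exact hz0 (hinj (hsrc z hzε) h0src (by rw [hfz0, hf0]))
  -- min of ‖f‖ on the sphere
  have hsphne : (sphere (0:ℂ) ε).Nonempty := NormedSpace.sphere_nonempty.2 hε.le
  have hfc : ContinuousOn f (closedBall (0:ℂ) ε) :=
    (hf.mono (fun z hz => mem_ball_zero_iff.2
      (lt_of_le_of_lt (mem_closedBall_zero_iff.1 hz) hεlt))).continuousOn
  obtain ⟨z₀, hz₀, hz₀min'⟩ := (isCompact_sphere (0:ℂ) ε).exists_isMinOn hsphne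
    ((continuous_norm.comp_continuousOn (hfc.mono sphere_subset_closedBall)))
  have hz₀min : ∀ z ∈ sphere (0:ℂ) ε, ‖f z₀‖ ≤ ‖f z‖ := fun z hz => hz₀min' hz
  set c : ℝ := ‖f z₀‖ with hcdef
  have hzsphere : ∀ z : ℂ, z ∈ sphere (0:ℂ) ε → (z ≠ 0 ∧ ‖z‖ ≤ ε) := by
    intro z hz
    have : ‖z‖ = ε := mem_sphere_zero_iff_norm.1 hz
    exact ⟨by intro h; rw [h] at this; simp at this; linarith, this.le⟩
  have hc : 0 < c := by
    have := hzsphere z₀ hz₀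
    exact norm_pos_iff.2 (hfz z₀ this.1 this.2)
  -- continuity of local inverse
  have h0tgt : (0:ℂ) ∈ Φ.target := by
    have := Φ.map_source h0src; rwa [hΦcoe, hf0] at this
  have hsymm0 : Φ.symm 0 = 0 := by
    have := Φ.left_inv h0src; rwa [hΦcoe, hf0] at this
  have hT : Φ.target ∩ Φ.symm ⁻¹' (ball 0 ε) ∈ 𝓝 (0:ℂ) := by
    refine inter_mem (Φ.open_target.mem_nhds h0tgt) ?_
    have hc2 : ContinuousAt Φ.symm 0 := Φ.continuousAt_symm h0tgt
    have := hc2.preimage_mem_nhds (by rw [hsymm0]; exact ball_mem_nhds _ hε)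
    exact this
  obtain ⟨δ₁, hδ₁, hδ₁T⟩ := Metric.mem_nhds_iff.1 hT
  set δ : ℝ := min δ₁ c with hδdef
  have hδ : 0 < δ := lt_min hδ₁ hc
  -- for each t
  have hg : ∀ t : ℂ, 0 < ‖t‖ → ‖t‖ < δ →
      (‖Φ.symm t‖ < ε ∧ f (Φ.symm t) = t) ∧
      (∀ z : ℂ, ‖z‖ < ε → f z = t → z = Φ.symm t) := by
    intro t ht0 htδ
    have htT : t ∈ Φ.target ∩ Φ.symm ⁻¹' (ball 0 ε) :=
      hδ₁T (mem_ball_zero_iff.2 (lt_of_lt_of_le htδ (min_le_left _ _)))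
    have hgt : f (Φ.symm t) = t := by
      have := Φ.right_inv htT.1; rwa [hΦcoe] at this
    have hgε : ‖Φ.symm t‖ < ε := mem_ball_zero_iff.1 htT.2
    refine ⟨⟨hgε, hgt⟩, ?_⟩
    intro z hzε hfzt
    exact hinj (hsrc z hzε.le) (Φ.map_target htT.1) (by rw [hfzt, hgt])
  -- Now the HasSum statement
  have hcball : closedBall (0:ℂ) ε ⊆ ball (0:ℂ) R := fun z hz =>
    mem_ball_zero_iff.2 (lt_of_le_of_lt (mem_closedBall_zero_iff.1 hz) hεlt)
  have hmball : ∀ z : ℂ, ‖z‖ ≤ ε → m * z ∈ ball (0:ℂ) R := by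
    intro z hz
    rw [mem_ball_zero_iff, norm_mul]
    calc ‖m‖ * ‖z‖ ≤ max 1 ‖m‖ * ε :=
          mul_le_mul (le_max_right _ _) hz (norm_nonneg _) hmaxpos.le
      _ < R := hεR
  have hh : DifferentiableOn ℂ (fun z => f (m * z)) (closedBall (0:ℂ) ε) := by
    apply hf.comp ((differentiable_id.const_mul m).differentiableOn)
    intro z hz
    exact hmball z (mem_closedBall_zero_iff.1 hz)
  have hconth : ContinuousOn (fun z => f (m * z)) (sphere (0:ℂ) ε) :=
    hh.continuousOn.mono sphere_subset_closedBall
  have hcontf : ContinuousOn f (sphere (0:ℂ) ε) := hfc.mono sphere_subset_closedBall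
  have hsphfacts : ∀ z : ℂ, z ∈ sphere (0:ℂ) ε → f z ≠ 0 ∧ c ≤ ‖f z‖ := by
    intro z hz
    exact ⟨hfz z (hzsphere z hz).1 (hzsphere z hz).2, hz₀min z hz⟩
  have hsum : ∀ t : ℂ, 0 < ‖t‖ → ‖t‖ < δ →
      HasSum (fun n : ℕ => t ^ (n + 1) * ((2 * (Real.pi : ℂ) * I)⁻¹ *
          ∮ z in C(0, ε), f (m * z) / (f z) ^ (n + 2)))
        (f (m * Φ.symm t) / deriv f (Φ.symm t)) := by
    intro t ht0 htδ
    obtain ⟨⟨hgε, hgt⟩, huniq⟩ := hg t ht0 htδ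
    set g : ℂ := Φ.symm t with hgdef
    have htc : ‖t‖ < c := lt_of_lt_of_le htδ (min_le_right _ _)
    have hftne : ∀ z : ℂ, z ∈ sphere (0:ℂ) ε → f z - t ≠ 0 := by
      intro z hz
      have := (hsphfacts z hz).2
      intro h
      rw [sub_eq_zero] at h
      rw [← h] at htc; linarith
    have hftne' : ∀ z : ℂ, ‖z‖ ≤ ε → z ≠ g → f z - t ≠ 0 := by
      intro z hzε hzg h
      rw [sub_eq_zero] at h
      rcases lt_or_eq_of_le hzε with hlt | heq
      · exact hzg (huniq z hlt h)
      · exact hftne z (mem_sphere_zero_iff_norm.2 heq) (by rw [h, sub_self])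
    -- the dslope functions
    set u : ℂ → ℂ := dslope (fun w => f w - t) g with hudef
    have hu : DifferentiableOn ℂ u (closedBall (0:ℂ) ε) := by
      have h1 : DifferentiableOn ℂ (fun w => f w - t) (ball (0:ℂ) R) := hf.sub_const t
      have h2 : g ∈ ball (0:ℂ) R := mem_ball_zero_iff.2 (lt_trans hgε hεlt)
      exact ((Complex.differentiableOn_dslope (isOpen_ball.mem_nhds h2)).mpr h1).mono hcball
    have hug : u g = deriv f g := by rw [hudef, dslope_same]; exact deriv_sub_const t
    have huz : ∀ z : ℂ, z ≠ g → u z = (f z - t) / (z - g) := by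
      intro z hzg
      rw [hudef, dslope_of_ne _ hzg, slope_def_field, hgt, sub_self, sub_zero]
    have hune : ∀ z ∈ closedBall (0:ℂ) ε, u z ≠ 0 := by
      intro z hz
      rcases eq_or_ne z g with rfl | hzg
      · rw [hug]; exact hderiv _ (mem_closedBall_zero_iff.1 hz)
      · rw [huz z hzg]
        exact div_ne_zero (hftne' z (mem_closedBall_zero_iff.1 hz) hzg) (sub_ne_zero.2 hzg)
    set v : ℂ → ℂ := dslope f 0 with hvdef
    have hv : DifferentiableOn ℂ v (closedBall (0:ℂ) ε) :=
      ((Complex.differentiableOn_dslope (isOpen_ball.mem_nhds h0R)).mpr hf).mono hcball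
    have hv0 : v 0 = deriv f 0 := by rw [hvdef, dslope_same]
    have hvz : ∀ z : ℂ, z ≠ 0 → v z = f z / z := by
      intro z hz
      rw [hvdef, dslope_of_ne _ hz, slope_def_field, hf0, sub_zero, sub_zero]
    have hvne : ∀ z ∈ closedBall (0:ℂ) ε, v z ≠ 0 := by
      intro z hz
      rcases eq_or_ne z 0 with rfl | hz0
      · rw [hv0]; exact hf'0
      · rw [hvz z hz0]
        exact div_ne_zero (hfz z hz0 (mem_closedBall_zero_iff.1 hz)) hz0
    -- Cauchy integral formulas
    have key1 : (∮ z in C(0, ε), f (m * z) / (f z - t)) =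
        (2 * (Real.pi : ℂ) * I) * (f (m * g) / deriv f g) := by
      have hH : DifferentiableOn ℂ (fun z => f (m * z) / u z) (closedBall (0:ℂ) ε) :=
        hh.div hu hune
      have hcauchy := hH.circleIntegral_sub_inv_smul (mem_ball_zero_iff.2 hgε)
      have heq : Set.EqOn (fun z => f (m * z) / (f z - t))
          (fun z => (z - g)⁻¹ • (f (m * z) / u z)) (sphere (0:ℂ) ε) := by
        intro z hz
        have hzg : z ≠ g := by
          intro h; rw [mem_sphere_zero_iff_norm.1 (h ▸ hz)] at hgε; exact absurd hgε (lt_irrefl _)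
        have hzgne : z - g ≠ 0 := sub_ne_zero.2 hzg
        simp only [smul_eq_mul, huz z hzg]
        field_simp
      rw [circleIntegral.integral_congr hε.le heq, hcauchy, smul_eq_mul, hug]
    have key2 : (∮ z in C(0, ε), f (m * z) / f z) = 0 := by
      have hH : DifferentiableOn ℂ (fun z => f (m * z) / v z) (closedBall (0:ℂ) ε) :=
        hh.div hv hvne
      have hcauchy := hH.circleIntegral_sub_inv_smul (mem_ball_self hε)
      have heq : Set.EqOn (fun z => f (m * z) / f z)
          (fun z => (z - 0)⁻¹ • (f (m * z) / v z)) (sphere (0:ℂ) ε) := by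
        intro z hz
        have hz0 : z ≠ 0 := (hzsphere z hz).1
        simp only [smul_eq_mul, hvz z hz0, sub_zero]
        field_simp
      rw [circleIntegral.integral_congr hε.le heq, hcauchy, smul_eq_mul]
      simp [hf0]
    -- the generating integrand
    set F₀ : ℂ → ℂ := fun z => t * f (m * z) / (f z * (f z - t)) with hF₀def
    have hcontF₀ : ContinuousOn F₀ (sphere (0:ℂ) ε) := by
      apply ContinuousOn.div (continuousOn_const.mul hconth)
        (hcontf.mul (hcontf.sub continuousOn_const))
      intro z hz
      exact mul_ne_zero (hsphfacts z hz).1 (hftne z hz)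
    have hcontq : ∀ N : ℕ, ContinuousOn (fun z => (t / f z)^N * F₀ z) (sphere (0:ℂ) ε) := by
      intro N
      exact (((continuousOn_const.div hcontf (fun z hz => (hsphfacts z hz).1)).pow N).mul hcontF₀)
    have hintq : ∀ N : ℕ, CircleIntegrable (fun z => (t / f z)^N * F₀ z) 0 ε :=
      fun N => (hcontq N).circleIntegrable hε.le
    set E : ℕ → ℂ := fun N => ∮ z in C(0, ε), (t / f z)^N * F₀ z with hEdef
    have keyA : E 0 = (2 * (Real.pi : ℂ) * I) * (f (m * g) / deriv f g) := by
      have heq0 : Set.EqOn (fun z => (t / f z)^(0:ℕ) * F₀ z)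
          (fun z => f (m * z) / (f z - t) - f (m * z) / f z) (sphere (0:ℂ) ε) := by
        intro z hz
        have h1 : f z ≠ 0 := (hsphfacts z hz).1
        have h2 : f z - t ≠ 0 := hftne z hz
        simp only [pow_zero, one_mul, hF₀def]
        field_simp
        ring
      have hint1 : CircleIntegrable (fun z => f (m * z) / (f z - t)) 0 ε :=
        (hconth.div (hcontf.sub continuousOn_const) hftne).circleIntegrable hε.le
      have hint2 : CircleIntegrable (fun z => f (m * z) / f z) 0 ε :=
        (hconth.div hcontf (fun z hz => (hsphfacts z hz).1)).circleIntegrable hε.le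
      simp only [hEdef]
      rw [circleIntegral.integral_congr hε.le heq0,
        circleIntegral.integral_sub hint1 hint2, key1, key2, sub_zero]
    have hE : ∀ N : ℕ, E N - E (N+1) =
        t^(N+1) * (∮ z in C(0, ε), f (m * z) / (f z)^(N+2)) := by
      intro N
      simp only [hEdef]
      rw [← circleIntegral.integral_sub (hintq N) (hintq (N+1))]
      have heq : Set.EqOn (fun z => (t / f z)^N * F₀ z - (t / f z)^(N+1) * F₀ z)
          (fun z => t^(N+1) • (f (m * z) / (f z)^(N+2))) (sphere (0:ℂ) ε) := by
        intro z hz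
        have h1 : f z ≠ 0 := (hsphfacts z hz).1
        have h2 : f z - t ≠ 0 := hftne z hz
        simp only [smul_eq_mul, hF₀def, div_pow]
        field_simp
        ring
      rw [circleIntegral.integral_congr hε.le heq, circleIntegral.integral_smul, smul_eq_mul]
    set term : ℕ → ℂ := fun n => t ^ (n + 1) * ((2 * (Real.pi : ℂ) * I)⁻¹ *
        ∮ z in C(0, ε), f (m * z) / (f z) ^ (n + 2)) with htermdef
    have h2πI : (2 * (Real.pi : ℂ) * I) ≠ 0 := by
      simp [Real.pi_ne_zero, I_ne_zero]
    have hP : ∀ N : ℕ, ∑ n ∈ Finset.range N, term n =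
        (2 * (Real.pi : ℂ) * I)⁻¹ * (E 0 - E N) := by
      intro N
      induction N with
      | zero => simp
      | succ N ih =>
        rw [Finset.sum_range_succ, ih]
        simp only [htermdef]
        linear_combination (-(2 * (Real.pi : ℂ) * I)⁻¹) * hE N
    -- bounds
    set q : ℝ := ‖t‖ / c with hqdef
    have hq0 : 0 ≤ q := div_nonneg (norm_nonneg _) hc.le
    have hq1 : q < 1 := (div_lt_one hc).2 htc
    obtain ⟨M, hM⟩ := (isCompact_sphere (0:ℂ) ε).exists_bound_of_continuousOn hcontF₀
    have hMnn : 0 ≤ M := le_trans (norm_nonneg _) (hM z₀ hz₀)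
    have hqbound : ∀ z ∈ sphere (0:ℂ) ε, ‖t / f z‖ ≤ q := by
      intro z hz
      rw [norm_div, hqdef]
      exact div_le_div_of_nonneg_left (norm_nonneg _) hc (hsphfacts z hz).2
    have hEbound : ∀ N : ℕ, ‖E N‖ ≤ 2 * Real.pi * ε * M * q ^ N := by
      intro N
      have := circleIntegral.norm_integral_le_of_norm_le_const (c := (0:ℂ))
        (f := fun z => (t / f z)^N * F₀ z) (R := ε) (C := q ^ N * M) hε.le ?_
      · calc ‖E N‖ ≤ 2 * Real.pi * ε * (q ^ N * M) := this
          _ = 2 * Real.pi * ε * M * q ^ N := by ring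
      · intro z hz
        rw [norm_mul, norm_pow]
        exact mul_le_mul (pow_le_pow_left₀ (norm_nonneg _) (hqbound z hz) N)
          (hM z hz) (norm_nonneg _) (pow_nonneg hq0 N)
    have hElim : Filter.Tendsto E Filter.atTop (nhds 0) := by
      apply squeeze_zero_norm hEbound
      have := (tendsto_pow_atTop_nhds_zero_of_lt_one hq0 hq1).const_mul (2 * Real.pi * ε * M)
      simpa using this
    have hPlim : Filter.Tendsto (fun N => ∑ n ∈ Finset.range N, term n) Filter.atTop
        (nhds ((2 * (Real.pi : ℂ) * I)⁻¹ * E 0)) := by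
      simp only [hP]
      have h1 : Filter.Tendsto (fun N : ℕ => E 0 - E N) Filter.atTop (nhds (E 0 - 0)) :=
        tendsto_const_nhds.sub hElim
      rw [sub_zero] at h1
      exact h1.const_mul _
    -- summability
    obtain ⟨K, hK⟩ := (isCompact_sphere (0:ℂ) ε).exists_bound_of_continuousOn hconth
    have hKnn : 0 ≤ K := le_trans (norm_nonneg _) (hK z₀ hz₀)
    have hIbound : ∀ n : ℕ, ‖∮ z in C(0, ε), f (m * z) / (f z)^(n+2)‖ ≤
        2 * Real.pi * ε * (K / c^(n+2)) := by
      intro n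
      have := circleIntegral.norm_integral_le_of_norm_le_const (c := (0:ℂ))
        (f := fun z => f (m * z) / (f z)^(n+2)) (R := ε) (C := K / c^(n+2)) hε.le ?_
      · exact this
      · intro z hz
        rw [norm_div, norm_pow]
        exact div_le_div₀ hKnn (hK z hz) (pow_pos hc _)
          (pow_le_pow_left₀ hc.le (hsphfacts z hz).2 _)
    have hnorm2πI : ‖(2 * (Real.pi : ℂ) * I)⁻¹‖ = (2 * Real.pi)⁻¹ := by
      rw [norm_inv, norm_mul, norm_mul, Complex.norm_I, mul_one]
      norm_num [Complex.norm_real, Real.pi_nonneg, abs_of_nonneg]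
    have htermbound : ∀ n : ℕ, ‖term n‖ ≤ (ε * K * ‖t‖ / c^2) * q^n := by
      intro n
      simp only [htermdef]
      rw [norm_mul, norm_mul, norm_pow, hnorm2πI]
      calc ‖t‖^(n+1) * ((2 * Real.pi)⁻¹ * ‖∮ z in C(0, ε), f (m * z) / (f z)^(n+2)‖)
          ≤ ‖t‖^(n+1) * ((2 * Real.pi)⁻¹ * (2 * Real.pi * ε * (K / c^(n+2)))) := by
            apply mul_le_mul_of_nonneg_left
              (mul_le_mul_of_nonneg_left (hIbound n) (by positivity)) (by positivity)
        _ = (ε * K * ‖t‖ / c^2) * q^n := by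
            rw [hqdef, div_pow]
            field_simp
            ring
    have hsummable : Summable term :=
      Summable.of_norm_bounded ((summable_geometric_of_lt_one hq0 hq1).mul_left _) htermbound
    have hhs := hsummable.hasSum
    have heqlim := tendsto_nhds_unique hhs.tendsto_sum_nat hPlim
    rw [heqlim] at hhs
    have hE0 : (2 * (Real.pi : ℂ) * I)⁻¹ * E 0 = f (m * g) / deriv f g := by
      rw [keyA, ← mul_assoc, inv_mul_cancel₀ h2πI, one_mul]
    rwa [hE0] at hhs
  refine ⟨ε, hε, hεR, δ, hδ, hderiv, hfz, ?_⟩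
  intro t ht0 htδ
  obtain ⟨⟨hgε, hgt⟩, huniq⟩ := hg t ht0 htδ
  exact ⟨Φ.symm t, ⟨hgε, hgt⟩, huniq, hsum t ht0 htδ⟩
end

section
/- Let R > 0, let f be holomorphic on the disk {z ∈ ℂ : |z| < R} with f(0) = 0 and f′(0) ≠ 0, and let m₁, …, m_r ∈ ℂ be nonzero. Then there exist ε > 0 with max(1,|m₁|,…,|m_r|)·ε < R and δ > 0 such that: f′ has no zero on {|z| ≤ ε}, f has no zero on {0 < |z| ≤ ε}, for every t ∈ ℂ with 0 < |t| < δ there is a unique point g(t) with |g(t)| < ε and f(g(t)) = t, and the series ∑_{n=r}^∞ tⁿ · (1/(2πi)) ∮_{|z|=ε} f(m₁z)⋯f(m_r z)/f(z)^{n+1} dz converges with sum equal to f(m₁·g(t))⋯f(m_r·g(t))/f′(g(t)). -/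
open Complex Metric

/-- Lemma 2.5 (general case): for `f` holomorphic near `0` with `f 0 = 0`,
`f' 0 ≠ 0` and nonzero constants `m₁, …, m_r`, the generating series of the
residues `Res_z f(m₁z)⋯f(m_r z)/f(z)^{n+1}` (starting at `n = r`) equals
`f(m₁ g(t))⋯f(m_r g(t))/f'(g(t))`, where `g` is the local inverse of `f`. -/
theorem elliptic_genera_residue_lemma_general
    (R : ℝ) (hR : 0 < R) (f : ℂ → ℂ)
    (hf : DifferentiableOn ℂ f (ball (0 : ℂ) R))
    (hf0 : f 0 = 0) (hf'0 : deriv f 0 ≠ 0)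
    (r : ℕ) (hr : 1 ≤ r) (m : Fin r → ℂ) (hm : ∀ i, m i ≠ 0) :
    ∃ ε > (0 : ℝ), (∀ i, max 1 ‖m i‖ * ε < R) ∧ ∃ δ > (0 : ℝ),
      (∀ z : ℂ, ‖z‖ ≤ ε → deriv f z ≠ 0) ∧
      (∀ z : ℂ, z ≠ 0 → ‖z‖ ≤ ε → f z ≠ 0) ∧
      ∀ t : ℂ, 0 < ‖t‖ → ‖t‖ < δ →
        ∃ g : ℂ, (‖g‖ < ε ∧ f g = t) ∧
          (∀ z : ℂ, ‖z‖ < ε → f z = t → z = g) ∧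
          HasSum
            (fun n : ℕ =>
              t ^ (n + r) *
                ((2 * (Real.pi : ℂ) * I)⁻¹ *
                  ∮ z in C(0, ε), (∏ i, f (m i * z)) / (f z) ^ (n + r + 1)))
            ((∏ i, f (m i * g)) / deriv f g) := by
  have i₀ : Fin r := ⟨0, hr⟩
  have hball : (0 : ℂ) ∈ ball (0 : ℂ) R := by simpa using hR
  have hfa : AnalyticOnNhd ℂ f (ball (0 : ℂ) R) := hf.analyticOnNhd isOpen_ball
  -- `deriv f` nonvanishing near 0
  obtain ⟨r₁, hr₁pos, hr₁⟩ : ∃ r₁ > 0, ∀ z : ℂ, ‖z‖ < r₁ → deriv f z ≠ 0 := by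
    have hc : ContinuousAt (deriv f) 0 := (hfa.deriv 0 hball).continuousAt
    have := hc.eventually_ne hf'0
    rw [Metric.eventually_nhds_iff] at this
    obtain ⟨e, he, H⟩ := this
    exact ⟨e, he, fun z hz => H (by simpa [dist_eq_norm] using hz)⟩
  -- `dslope f 0` nonvanishing near 0
  set φ : ℂ → ℂ := dslope f 0 with hφdef
  have hφ0 : φ 0 = deriv f 0 := dslope_same f 0
  have hφdiff : DifferentiableOn ℂ φ (ball (0 : ℂ) R) :=
    (Complex.differentiableOn_dslope (isOpen_ball.mem_nhds hball)).mpr hf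
  obtain ⟨r₂, hr₂pos, hr₂⟩ : ∃ r₂ > 0, ∀ z : ℂ, ‖z‖ < r₂ → φ z ≠ 0 := by
    have hc : ContinuousAt φ 0 :=
      (continuousAt_dslope_same).mpr (hf.differentiableAt (isOpen_ball.mem_nhds hball))
    have := hc.eventually_ne (by rw [hφ0]; exact hf'0)
    rw [Metric.eventually_nhds_iff] at this
    obtain ⟨e, he, H⟩ := this
    exact ⟨e, he, fun z hz => H (by simpa [dist_eq_norm] using hz)⟩
  have hφmul : ∀ z : ℂ, z * φ z = f z := by
    intro z
    have := sub_smul_dslope f 0 z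
    simpa [hf0, smul_eq_mul] using this
  -- local inverse
  have hA : AnalyticAt ℂ f 0 := hfa 0 hball
  obtain ⟨p, hp⟩ := hA
  have hstrict : HasStrictDerivAt f (deriv f 0) 0 := hp.deriv ▸ hp.hasStrictDerivAt
  have hSfd := hstrict.hasStrictFDerivAt_equiv hf'0
  set e := hSfd.toOpenPartialHomeomorph f with he_def
  have he_coe : (e : ℂ → ℂ) = f := hSfd.toOpenPartialHomeomorph_coe
  obtain ⟨r₃, hr₃pos, hr₃⟩ : ∃ r₃ > 0, ball (0 : ℂ) r₃ ⊆ e.source := by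
    have := e.open_source
    rw [Metric.isOpen_iff] at this
    obtain ⟨e', he', H⟩ := this 0 hSfd.mem_toOpenPartialHomeomorph_source
    exact ⟨e', he', H⟩
  -- radius for the `m i` bound
  set r₄ : ℝ := Finset.univ.inf' ⟨i₀, Finset.mem_univ _⟩ fun i => R / max 1 ‖m i‖ with hr₄def
  have hr₄pos : 0 < r₄ := by
    rw [hr₄def]; refine (Finset.lt_inf'_iff (H := _)).mpr ?_
    intro i _
    exact div_pos hR (lt_of_lt_of_le one_pos (le_max_left _ _))
  have hr₄le : ∀ i, r₄ ≤ R / max 1 ‖m i‖ := fun i =>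
    Finset.inf'_le _ (Finset.mem_univ i)
  -- the radius ε
  set ε : ℝ := min r₁ (min r₂ (min r₃ r₄)) / 2 with hεdef
  have hεpos : 0 < ε := by positivity
  have hεr₁ : ε < r₁ := by
    have h1 : min r₁ (min r₂ (min r₃ r₄)) ≤ r₁ := min_le_left _ _
    have h2 : 0 < min r₁ (min r₂ (min r₃ r₄)) := by positivity
    rw [hεdef]; linarith
  have hεr₂ : ε < r₂ := by
    have h1 : min r₁ (min r₂ (min r₃ r₄)) ≤ r₂ := (min_le_right _ _).trans (min_le_left _ _)
    have h2 : 0 < min r₁ (min r₂ (min r₃ r₄)) := by positivity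
    rw [hεdef]; linarith
  have hεr₃ : ε < r₃ := by
    have h1 : min r₁ (min r₂ (min r₃ r₄)) ≤ r₃ :=
      (min_le_right _ _).trans ((min_le_right _ _).trans (min_le_left _ _))
    have h2 : 0 < min r₁ (min r₂ (min r₃ r₄)) := by positivity
    rw [hεdef]; linarith
  have hεr₄ : ε < r₄ := by
    have h1 : min r₁ (min r₂ (min r₃ r₄)) ≤ r₄ :=
      (min_le_right _ _).trans ((min_le_right _ _).trans (min_le_right _ _))
    have h2 : 0 < min r₁ (min r₂ (min r₃ r₄)) := by positivity
    rw [hεdef]; linarith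
  have hεR : ∀ i, max 1 ‖m i‖ * ε < R := by
    intro i
    have h1 : (0:ℝ) < max 1 ‖m i‖ := lt_of_lt_of_le one_pos (le_max_left _ _)
    have h2 : ε < R / max 1 ‖m i‖ := hεr₄.trans_le (hr₄le i)
    calc max 1 ‖m i‖ * ε < max 1 ‖m i‖ * (R / max 1 ‖m i‖) := by
          exact mul_lt_mul_of_pos_left h2 h1
      _ = R := by field_simp
  have hεR' : ε < R := by
    have := hεR i₀
    have h1 : (1:ℝ) ≤ max 1 ‖m i₀‖ := le_max_left _ _
    nlinarith
  -- membership facts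
  have hmem : ∀ z : ℂ, ‖z‖ ≤ ε → z ∈ ball (0 : ℂ) R := fun z hz => by
    simp only [mem_ball, dist_zero_right]; linarith
  have hmemm : ∀ i, ∀ z : ℂ, ‖z‖ ≤ ε → m i * z ∈ ball (0 : ℂ) R := by
    intro i z hz
    simp only [mem_ball, dist_zero_right, norm_mul]
    calc ‖m i‖ * ‖z‖ ≤ max 1 ‖m i‖ * ε := by
          apply mul_le_mul (le_max_right _ _) hz (norm_nonneg _)
          exact le_trans zero_le_one (le_max_left _ _)
      _ < R := hεR i
  -- first two conclusions
  have hd'ne : ∀ z : ℂ, ‖z‖ ≤ ε → deriv f z ≠ 0 := fun z hz => hr₁ z (lt_of_le_of_lt hz hεr₁)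
  have hφne : ∀ z : ℂ, ‖z‖ ≤ ε → φ z ≠ 0 := fun z hz => hr₂ z (lt_of_le_of_lt hz hεr₂)
  have hfne : ∀ z : ℂ, z ≠ 0 → ‖z‖ ≤ ε → f z ≠ 0 := by
    intro z hz0 hz
    rw [← hφmul z]
    exact mul_ne_zero hz0 (hφne z hz)
  -- minimum of ‖f‖ on the circle
  obtain ⟨z₀, hz₀mem, hz₀min⟩ :=
    (isCompact_sphere (0:ℂ) ε).exists_isMinOn
      (NormedSpace.sphere_nonempty.mpr hεpos.le)
      (((hf.mono (fun z hz => hmem z (by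
        rw [mem_sphere_iff_norm, sub_zero] at hz; exact hz.le))).continuousOn).norm)
  set δ₁ : ℝ := ‖f z₀‖ with hδ₁def
  have hz₀norm : ‖z₀‖ = ε := by rwa [mem_sphere_iff_norm, sub_zero] at hz₀mem
  have hδ₁pos : 0 < δ₁ := by
    rw [hδ₁def, norm_pos_iff]
    exact hfne z₀ (by intro h; rw [h] at hz₀norm; simp at hz₀norm; linarith)
      hz₀norm.le
  have hcirc : ∀ z ∈ sphere (0:ℂ) ε, δ₁ ≤ ‖f z‖ := fun z hz => hz₀min hz
  -- δ₂ : local inverse works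
  set g0 : ℂ → ℂ := hSfd.localInverse f _ 0 with hg0def
  obtain ⟨δ₂, hδ₂pos, hδ₂⟩ : ∃ δ₂ > 0, ∀ y : ℂ, ‖y‖ < δ₂ → f (g0 y) = y ∧ ‖g0 y‖ < ε := by
    have h1 : ∀ᶠ y in nhds (0:ℂ), f (g0 y) = y := by
      have := hSfd.eventually_right_inverse
      rwa [hf0] at this
    have h2 : ∀ᶠ y in nhds (0:ℂ), ‖g0 y‖ < ε := by
      have htend := hSfd.localInverse_tendsto
      rw [hf0] at htend
      have : ∀ᶠ w in nhds (0:ℂ), ‖w‖ < ε := by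
        have : Metric.ball (0:ℂ) ε ∈ nhds (0:ℂ) := ball_mem_nhds _ hεpos
        filter_upwards [this] with w hw
        simpa [dist_zero_right] using hw
      exact htend.eventually this
    have := (h1.and h2)
    rw [Metric.eventually_nhds_iff] at this
    obtain ⟨d, hd, H⟩ := this
    exact ⟨d, hd, fun y hy => H (by simpa [dist_eq_norm] using hy)⟩
  -- the product function
  set Hf : ℂ → ℂ := fun z => ∏ i, f (m i * z) with hHdef
  have hHdiff : ∀ z : ℂ, ‖z‖ ≤ ε → DifferentiableAt ℂ Hf z := by
    intro z hz
    apply DifferentiableAt.fun_finsetProd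
    intro i _
    exact (hf.differentiableAt (isOpen_ball.mem_nhds (hmemm i z hz))).comp z
      ((differentiableAt_id.const_mul (m i)))
  obtain ⟨M, hM⟩ := (isCompact_sphere (0:ℂ) ε).exists_bound_of_continuousOn
    (fun z hz => ((hHdiff z (by rw [mem_sphere_iff_norm, sub_zero] at hz; exact hz.le)).continuousAt).continuousWithinAt)
  have hM0 : 0 ≤ M := (norm_nonneg _).trans (hM z₀ hz₀mem)
  -- vanishing of the first r residues
  have hvanish : ∀ k : ℕ, k < r → (∮ z in C(0, ε), Hf z / f z ^ (k + 1)) = 0 := by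
    intro k hk
    set G' : ℂ → ℂ :=
      fun z => z ^ (r - (k + 1)) * (∏ i, m i * φ (m i * z)) / φ z ^ (k + 1) with hG'def
    have hG'diff : ∀ z : ℂ, ‖z‖ ≤ ε → DifferentiableAt ℂ G' z := by
      intro z hz
      apply DifferentiableAt.div
      · apply DifferentiableAt.mul
        · exact differentiableAt_pow _
        · apply DifferentiableAt.fun_finsetProd
          intro i _
          exact ((hφdiff.differentiableAt
            (isOpen_ball.mem_nhds (hmemm i z hz))).comp z
            (differentiableAt_id.const_mul (m i))).const_mul (m i)
      · exact (hφdiff.differentiableAt (isOpen_ball.mem_nhds (hmem z hz))).pow _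
      · exact pow_ne_zero _ (hφne z hz)
    have hEq : Set.EqOn (fun z => Hf z / f z ^ (k + 1)) G' (sphere (0 : ℂ) ε) := by
      intro z hz
      rw [mem_sphere_iff_norm, sub_zero] at hz
      have hz0 : z ≠ 0 := by
        intro h; rw [h, norm_zero] at hz; linarith
      have hφz : φ z ≠ 0 := hφne z hz.le
      have hHz : Hf z = z ^ r * ∏ i, m i * φ (m i * z) := by
        rw [hHdef]
        simp only
        have hterm : ∀ i : Fin r, f (m i * z) = z * (m i * φ (m i * z)) := by
          intro i; rw [← hφmul (m i * z)]; ring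
        calc (∏ i, f (m i * z)) = ∏ i, z * (m i * φ (m i * z)) := by
              exact Finset.prod_congr rfl fun i _ => hterm i
          _ = (∏ _i : Fin r, z) * ∏ i, m i * φ (m i * z) := Finset.prod_mul_distrib
          _ = z ^ r * ∏ i, m i * φ (m i * z) := by
              rw [Finset.prod_const, Finset.card_univ, Fintype.card_fin]
      have hzr : z ^ r = z ^ (k + 1) * z ^ (r - (k + 1)) := by
        rw [← pow_add]; congr 1; omega
      show Hf z / f z ^ (k + 1) = G' z
      rw [hHz, ← hφmul z, hG'def]
      simp only
      rw [hzr, mul_pow]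
      field_simp
      ring_nf
      exact Finset.prod_congr rfl fun x _ => by rw [mul_comm z]
    have hzero := circleIntegral_eq_zero_of_differentiable_on_off_countable hεpos.le
      Set.countable_empty
      (f := G') (c := 0)
      (fun z hz => by
        rw [mem_closedBall, dist_zero_right] at hz
        exact ((hG'diff z hz).continuousAt).continuousWithinAt)
      (fun z hz => by
        rw [Set.mem_diff, mem_ball, dist_zero_right] at hz
        exact hG'diff z hz.1.le)
    rw [circleIntegral.integral_congr hεpos.le hEq]
    exact hzero
  -- assemble
  refine ⟨ε, hεpos, hεR, min δ₁ δ₂, lt_min hδ₁pos hδ₂pos, hd'ne, hfne, ?_⟩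
  intro t ht0 htδ
  have htδ₁ : ‖t‖ < δ₁ := htδ.trans_le (min_le_left _ _)
  have htδ₂ : ‖t‖ < δ₂ := htδ.trans_le (min_le_right _ _)
  obtain ⟨hfg, hgε⟩ := hδ₂ t htδ₂
  set g : ℂ := g0 t with hgdef
  have huniq : ∀ z : ℂ, ‖z‖ < ε → f z = t → z = g := by
    intro z hz hfz
    have hzs : z ∈ e.source := hr₃ (by rw [mem_ball, dist_zero_right]; linarith)
    have hgs : g ∈ e.source := hr₃ (by rw [mem_ball, dist_zero_right]; linarith)
    apply e.injOn hzs hgs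
    have : (e : ℂ → ℂ) z = f z := by rw [he_coe]
    rw [this, hfz]
    have : (e : ℂ → ℂ) g = f g := by rw [he_coe]
    rw [this, hfg]
  refine ⟨g, ⟨hgε, hfg⟩, huniq, ?_⟩
  -- residue evaluation via Cauchy's formula
  have hgball : g ∈ ball (0 : ℂ) R := hmem g hgε.le
  set ψ : ℂ → ℂ := dslope f g with hψdef
  have hψdiff : DifferentiableOn ℂ ψ (ball (0 : ℂ) R) :=
    (Complex.differentiableOn_dslope (isOpen_ball.mem_nhds hgball)).mpr hf
  have hψg : ψ g = deriv f g := dslope_same f g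
  have hfactor : ∀ z : ℂ, f z - t = (z - g) * ψ z := by
    intro z
    have h1 := sub_smul_dslope f g z
    rw [smul_eq_mul] at h1
    rw [h1, hfg]
  have hψne : ∀ z : ℂ, ‖z‖ ≤ ε → ψ z ≠ 0 := by
    intro z hz
    rcases eq_or_ne z g with rfl | hzg
    · rw [hψg]; exact hd'ne _ hz
    · intro h0
      have hfz : f z = t := by
        have h1 := hfactor z
        rw [h0, mul_zero, sub_eq_zero] at h1
        exact h1
      rcases lt_or_eq_of_le hz with hlt | heq
      · exact hzg (huniq z hlt hfz)
      · have h2 := hcirc z (by rw [mem_sphere_iff_norm, sub_zero]; exact heq)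
        rw [hfz] at h2
        linarith
  have hKdiff : DifferentiableOn ℂ (fun z => Hf z / ψ z) (closedBall (0 : ℂ) ε) := by
    intro z hz
    rw [mem_closedBall, dist_zero_right] at hz
    exact ((hHdiff z hz).differentiableWithinAt).div
      ((hψdiff.differentiableAt (isOpen_ball.mem_nhds (hmem z hz))).differentiableWithinAt)
      (hψne z hz)
  have hKcl : DiffContOnCl ℂ (fun z => Hf z / ψ z) (ball (0 : ℂ) ε) := by
    apply DifferentiableOn.diffContOnCl
    rwa [closure_ball (0 : ℂ) hεpos.ne']
  have hgball' : g ∈ ball (0 : ℂ) ε := by rw [mem_ball, dist_zero_right]; exact hgε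
  have hCauchy := hKcl.circleIntegral_sub_inv_smul hgball'
  have hsphere_ne : ∀ z ∈ sphere (0 : ℂ) ε, f z - t ≠ 0 := by
    intro z hz h
    have h2 := hcirc z hz
    rw [sub_eq_zero] at h
    rw [h] at h2
    linarith
  have hval : (∮ z in C(0, ε), Hf z / (f z - t)) =
      2 * (Real.pi : ℂ) * I * (Hf g / deriv f g) := by
    rw [← hψg, ← smul_eq_mul, ← hCauchy]
    apply circleIntegral.integral_congr hεpos.le
    intro z hz
    have hznorm : ‖z‖ = ε := by rwa [mem_sphere_iff_norm, sub_zero] at hz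
    have hzg : z ≠ g := by intro h; rw [h] at hznorm; linarith
    have hψz := hψne z hznorm.le
    have hzg' : z - g ≠ 0 := sub_ne_zero.mpr hzg
    simp only [smul_eq_mul]
    rw [hfactor z]
    field_simp
  -- the geometric series under the integral
  have hcm : ∀ θ : ℝ, circleMap 0 ε θ ∈ sphere (0 : ℂ) ε := circleMap_mem_sphere 0 hεpos.le 
  have hnorm_cm : ∀ θ : ℝ, ‖circleMap 0 ε θ‖ = ε := by
    intro θ
    have := hcm θ
    rwa [mem_sphere_iff_norm, sub_zero] at this
  have hfcne : ∀ z ∈ sphere (0 : ℂ) ε, f z ≠ 0 := by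
    intro z hz
    rw [mem_sphere_iff_norm, sub_zero] at hz
    exact hfne z (by intro h; rw [h, norm_zero] at hz; linarith) hz.le
  have hfc : Continuous fun θ : ℝ => f (circleMap 0 ε θ) := by
    rw [continuous_iff_continuousAt]
    intro θ
    exact ((hf.differentiableAt
      (isOpen_ball.mem_nhds (hmem _ (hnorm_cm θ).le))).continuousAt).comp
      (continuous_circleMap 0 ε).continuousAt
  have hHc : Continuous fun θ : ℝ => Hf (circleMap 0 ε θ) := by
    rw [continuous_iff_continuousAt]
    intro θ
    exact ((hHdiff _ (hnorm_cm θ).le).continuousAt).comp (continuous_circleMap 0 ε).continuousAt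
  have key : ∀ z ∈ sphere (0 : ℂ) ε, ∀ k : ℕ,
      ‖t ^ k * (Hf z / f z ^ (k + 1))‖ ≤ M / δ₁ * (‖t‖ / δ₁) ^ k := by
    intro z hz k
    rw [norm_mul, norm_pow, norm_div, norm_pow]
    have h1 : δ₁ ≤ ‖f z‖ := hcirc z hz
    have h2 : ‖Hf z‖ ≤ M := hM z hz
    calc ‖t‖ ^ k * (‖Hf z‖ / ‖f z‖ ^ (k + 1)) ≤ ‖t‖ ^ k * (M / δ₁ ^ (k + 1)) := by
          apply mul_le_mul_of_nonneg_left _ (pow_nonneg (norm_nonneg t) k)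
          exact div_le_div₀ hM0 h2 (pow_pos hδ₁pos _) (pow_le_pow_left₀ hδ₁pos.le h1 _)
      _ = M / δ₁ * (‖t‖ / δ₁) ^ k := by
          rw [div_pow]
          field_simp
          ring
  have hswap : HasSum (fun k : ℕ => ∮ z in C(0, ε), t ^ k * (Hf z / f z ^ (k + 1)))
      (∮ z in C(0, ε), Hf z / (f z - t)) := by
    simp only [circleIntegral]
    apply intervalIntegral.hasSum_integral_of_dominated_convergence
      (bound := fun (k : ℕ) (_ : ℝ) => ε * (M / δ₁ * (‖t‖ / δ₁) ^ k))
    · intro k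
      apply Continuous.aestronglyMeasurable
      have : Continuous fun θ : ℝ => deriv (circleMap 0 ε) θ := by
        simp only [deriv_circleMap]
        exact (continuous_circleMap 0 ε).mul continuous_const
      exact this.smul (continuous_const.mul (hHc.div (hfc.pow _)
        fun θ => pow_ne_zero _ (hfcne _ (hcm θ))))
    · intro k
      apply Filter.Eventually.of_forall
      intro θ _
      rw [norm_smul]
      have h1 : ‖deriv (circleMap 0 ε) θ‖ = ε := by
        rw [deriv_circleMap, norm_mul, Complex.norm_I, mul_one, hnorm_cm]
      rw [h1]
      exact mul_le_mul_of_nonneg_left (key _ (hcm θ) k) hεpos.le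
    · apply Filter.Eventually.of_forall
      intro θ _
      apply Summable.mul_left
      apply Summable.mul_left
      exact summable_geometric_of_lt_one (by positivity) (by
        rw [div_lt_one hδ₁pos]; exact htδ₁)
    · exact intervalIntegrable_const
    · apply Filter.Eventually.of_forall
      intro θ _
      have hz := hcm θ
      set z : ℂ := circleMap 0 ε θ with hzdef
      have hfz : f z ≠ 0 := hfcne z hz
      have hfzt : f z - t ≠ 0 := hsphere_ne z hz
      have h1 : δ₁ ≤ ‖f z‖ := hcirc z hz
      have hq : ‖t / f z‖ < 1 := by
        rw [norm_div, div_lt_one (lt_of_lt_of_le hδ₁pos h1)]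
        linarith
      have hgeo := hasSum_geometric_of_norm_lt_one hq
      have hsum := (hgeo.mul_left (Hf z / f z)).mul_left (deriv (circleMap 0 ε) θ)
      have hterm : ∀ k : ℕ, deriv (circleMap 0 ε) θ * (Hf z / f z * (t / f z) ^ k) =
          deriv (circleMap 0 ε) θ • (t ^ k * (Hf z / f z ^ (k + 1))) := by
        intro k
        rw [smul_eq_mul, div_pow]
        field_simp
        ring
      have hvalue : deriv (circleMap 0 ε) θ * (Hf z / f z * (1 - t / f z)⁻¹) =
          deriv (circleMap 0 ε) θ • (Hf z / (f z - t)) := by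
        rw [smul_eq_mul]
        have h2 : 1 - t / f z = (f z - t) / f z := by field_simp
        rw [h2, inv_div]
        field_simp
      rw [← hvalue]
      simp only [← hterm]
      exact hsum
  have hswap2 := hswap.mul_left (2 * (Real.pi : ℂ) * I)⁻¹
  rw [hval] at hswap2
  have hfun_eq : (fun k : ℕ => (2 * (Real.pi : ℂ) * I)⁻¹ *
        ∮ z in C(0, ε), t ^ k * (Hf z / f z ^ (k + 1))) =
      fun k : ℕ => t ^ k * ((2 * (Real.pi : ℂ) * I)⁻¹ *
        ∮ z in C(0, ε), Hf z / f z ^ (k + 1)) := by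
    funext k
    rw [circleIntegral.integral_const_mul]
    ring
  rw [hfun_eq, inv_mul_cancel_left₀ Complex.two_pi_I_ne_zero] at hswap2
  have hshift := (hasSum_nat_add_iff' (f := fun k : ℕ => t ^ k *
      ((2 * (Real.pi : ℂ) * I)⁻¹ * ∮ z in C(0, ε), Hf z / f z ^ (k + 1))) r).mpr hswap2
  rw [Finset.sum_eq_zero, sub_zero] at hshift
  · exact hshift
  · intro k hk
    rw [hvanish k (Finset.mem_range.mp hk), mul_zero, mul_zero]
end

section
/- Let R > 0, let f be holomorphic on the disk {z ∈ ℂ : |z| < R} with f(0) = 0 and f′(0) ≠ 0, and let m ∈ ℂ. Then for all sufficiently small ε > 0 (in particular with max(1,|m|)·ε < R and f nonvanishing on {0 < |z| ≤ ε}), (1/(2πi)) ∮_{|z|=ε} f(mz)/f(z)² dz = m/f′(0). -/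
open Complex Metric

/-- Lemma 2.6, case `n = 1`: `Res_z f(mz)/f(z)² = m/f'(0)`. -/
theorem residue_fmz_over_fz_sq
    (R : ℝ) (hR : 0 < R) (f : ℂ → ℂ)
    (hf : DifferentiableOn ℂ f (ball (0 : ℂ) R))
    (hf0 : f 0 = 0) (hf'0 : deriv f 0 ≠ 0) (m : ℂ) :
    ∀ ε : ℝ, 0 < ε → max 1 ‖m‖ * ε < R →
      (∀ z : ℂ, z ≠ 0 → ‖z‖ ≤ ε → f z ≠ 0) →
      (2 * (Real.pi : ℂ) * I)⁻¹ * (∮ z in C(0, ε), f (m * z) / (f z) ^ 2) =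
        m / deriv f 0 := by
  intro ε hε hεR hfne
  set d : ℂ → ℂ := dslope f 0 with hd
  have hd0 : d 0 = deriv f 0 := dslope_same f 0
  have hdd : DifferentiableOn ℂ d (ball (0 : ℂ) R) :=
    (differentiableOn_dslope (ball_mem_nhds _ hR)).2 hf
  have hfz : ∀ z : ℂ, f z = z * d z := by
    intro z
    rcases eq_or_ne z 0 with rfl | hz
    · simp [hf0]
    · rw [hd, dslope_of_ne f hz, slope_def_field]
      field_simp [hf0]
      simp only [hf0, sub_zero]; ring
  have hεR' : ε < R := by
    calc ε = 1 * ε := (one_mul ε).symm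
    _ ≤ max 1 ‖m‖ * ε := by
        exact mul_le_mul_of_nonneg_right (le_max_left _ _) hε.le
    _ < R := hεR
  have hmem : ∀ z : ℂ, ‖z‖ ≤ ε → m * z ∈ ball (0 : ℂ) R := by
    intro z hz
    simp only [mem_ball, dist_zero_right]
    calc ‖m * z‖ = ‖m‖ * ‖z‖ := norm_mul m z
    _ ≤ max 1 ‖m‖ * ε :=
        mul_le_mul (le_max_right _ _) hz (norm_nonneg z) (le_trans zero_le_one (le_max_left _ _))
    _ < R := hεR
  have hmem' : ∀ z : ℂ, ‖z‖ ≤ ε → z ∈ ball (0 : ℂ) R := by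
    intro z hz
    simp only [mem_ball, dist_zero_right]
    exact lt_of_le_of_lt hz hεR'
  have hdne : ∀ z : ℂ, ‖z‖ ≤ ε → d z ≠ 0 := by
    intro z hz
    rcases eq_or_ne z 0 with rfl | hz0
    · rw [hd0]; exact hf'0
    · intro h
      exact hfne z hz0 hz (by rw [hfz z, h, mul_zero])
  -- the auxiliary function
  set F : ℂ → ℂ := fun z => m * d (m * z) / (d z) ^ 2 with hF
  have hFd : DifferentiableOn ℂ F (closedBall (0 : ℂ) ε) := by
    apply DifferentiableOn.div
    · exact (differentiableOn_const m).mul <|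
        (hdd.comp ((differentiableOn_const m).mul (differentiableOn_id)) (fun z hz =>
          hmem z (by simpa [dist_zero_right] using hz)))
    · exact (hdd.mono fun z hz => hmem' z (by simpa [dist_zero_right] using hz)).pow 2
    · intro z hz
      exact pow_ne_zero 2 (hdne z (by simpa [dist_zero_right] using hz))
  have key : (∮ z in C(0, ε), (z - 0)⁻¹ • F z) = (2 * (Real.pi : ℂ) * I) • F 0 :=
    hFd.circleIntegral_sub_inv_smul (mem_ball_self hε)
  have heq : (∮ z in C(0, ε), f (m * z) / (f z) ^ 2) = ∮ z in C(0, ε), (z - 0)⁻¹ • F z := by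
    apply circleIntegral.integral_congr hε.le
    intro z hz
    have hzε : ‖z‖ = ε := by simpa [dist_zero_right] using hz
    have hz0 : z ≠ 0 := by
      intro h; rw [h] at hzε; simp at hzε; exact hε.ne' hzε.symm
    have hdz : d z ≠ 0 := hdne z hzε.le
    simp only
    rw [hfz (m * z), hfz z, hF]
    simp only [smul_eq_mul, sub_zero]
    field_simp
  have hF0 : F 0 = m / deriv f 0 := by
    rw [hF]
    simp only [mul_zero, hd0]
    rw [pow_two]
    field_simp
  rw [heq, key, hF0, smul_eq_mul, ← mul_assoc, inv_mul_cancel₀ (by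
    simp [Real.pi_ne_zero, I_ne_zero]), one_mul]
end

section
/- Let R > 0, let f be holomorphic on the disk {z ∈ ℂ : |z| < R} with f(0) = 0 and f′(0) ≠ 0, and let m ∈ ℂ. Then for all sufficiently small ε > 0 (in particular with max(1,|m|)·ε < R and f nonvanishing on {0 < |z| ≤ ε}), (1/(2πi)) ∮_{|z|=ε} f(mz)/f(z)³ dz = (m(m−3)/2) · f″(0)/f′(0)³. -/
open Complex Metric

private lemma coeff_eq_iteratedDeriv_aux {f : ℂ → ℂ} {p : FormalMultilinearSeries ℂ ℂ ℂ} {x : ℂ}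
    (hp : HasFPowerSeriesAt f p x) (n : ℕ) :
    (n.factorial : ℂ) * p.coeff n = iteratedDeriv n f x := by
  obtain ⟨r, hr⟩ := hp
  have h := hr.factorial_smul (1 : ℂ) n
  rw [iteratedDeriv_eq_iteratedFDeriv, ← h]
  have hc : p.coeff n = p n (fun _ => 1) := rfl
  rw [hc, nsmul_eq_mul]

/-- Lemma 2.6, case `n = 2`: `Res_z f(mz)/f(z)³ = (m(m−3)/2)·f''(0)/f'(0)³`. -/
theorem residue_fmz_over_fz_cube
    (R : ℝ) (hR : 0 < R) (f : ℂ → ℂ)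
    (hf : DifferentiableOn ℂ f (ball (0 : ℂ) R))
    (hf0 : f 0 = 0) (hf'0 : deriv f 0 ≠ 0) (m : ℂ) :
    ∀ ε : ℝ, 0 < ε → max 1 ‖m‖ * ε < R →
      (∀ z : ℂ, z ≠ 0 → ‖z‖ ≤ ε → f z ≠ 0) →
      (2 * (Real.pi : ℂ) * I)⁻¹ * (∮ z in C(0, ε), f (m * z) / (f z) ^ 3) =
        m * (m - 3) / 2 * (iteratedDeriv 2 f 0 / (deriv f 0) ^ 3) := by
  intro ε hε hεR hfz
  set a : ℂ := deriv f 0 with ha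
  set b : ℂ := iteratedDeriv 2 f 0 with hb
  have hm1 : (1 : ℝ) ≤ max 1 ‖m‖ := le_max_left _ _
  have hmm : ‖m‖ ≤ max 1 ‖m‖ := le_max_right _ _
  have hεR' : ε < R := by nlinarith
  -- membership facts
  have hmem : ∀ z : ℂ, ‖z‖ ≤ ε → z ∈ ball (0 : ℂ) R := by
    intro z hz
    simp only [mem_ball_zero_iff]
    linarith
  have hmemm : ∀ z : ℂ, ‖z‖ ≤ ε → m * z ∈ ball (0 : ℂ) R := by
    intro z hz
    simp only [mem_ball_zero_iff, norm_mul]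
    calc ‖m‖ * ‖z‖ ≤ max 1 ‖m‖ * ε := by
          apply mul_le_mul hmm hz (norm_nonneg z) (by linarith)
      _ < R := hεR
  -- the auxiliary function g with f z = z * g z
  set g : ℂ → ℂ := dslope f 0 with hgdef
  have hgdiff : DifferentiableOn ℂ g (ball (0 : ℂ) R) :=
    (differentiableOn_dslope (ball_mem_nhds (0 : ℂ) hR)).mpr hf
  have hfzg : ∀ z : ℂ, f z = z * g z := by
    intro z
    have h := sub_smul_dslope f 0 z
    simp only [sub_zero, hf0, smul_eq_mul] at h
    rw [← h, hgdef]
  have hg0 : g 0 = a := dslope_same f 0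
  have hgne : ∀ z : ℂ, ‖z‖ ≤ ε → g z ≠ 0 := by
    intro z hz
    rcases eq_or_ne z 0 with rfl | hz0
    · rw [hg0]; exact hf'0
    · intro h
      exact hfz z hz0 hz (by rw [hfzg z, h, mul_zero])
  -- the function h = f(mz)/g(z)^3, analytic near 0
  set h : ℂ → ℂ := fun z => f (m * z) / (g z) ^ 3 with hhdef
  have hdiffmul : ∀ z : ℂ, ‖z‖ ≤ ε → DifferentiableAt ℂ (fun w => f (m * w)) z := by
    intro z hz
    have h1 : DifferentiableAt ℂ f (m * z) :=
      hf.differentiableAt (isOpen_ball.mem_nhds (hmemm z hz))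
    exact h1.comp z (differentiableAt_id.const_mul m)
  have hdiffg : ∀ z : ℂ, ‖z‖ ≤ ε → DifferentiableAt ℂ g z := fun z hz =>
    hgdiff.differentiableAt (isOpen_ball.mem_nhds (hmem z hz))
  have hdiffh : ∀ z : ℂ, ‖z‖ ≤ ε → DifferentiableAt ℂ h z := by
    intro z hz
    exact (hdiffmul z hz).div ((hdiffg z hz).pow 3) (pow_ne_zero 3 (hgne z hz))
  -- power series representation of h on ball 0 ε via the Cauchy power series
  set εnn : NNReal := ⟨ε, hε.le⟩ with hεnn
  have hεnn0 : 0 < εnn := by exact_mod_cast hε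
  have hdc : DiffContOnCl ℂ h (ball (0 : ℂ) εnn) := by
    constructor
    · intro z hz
      exact (hdiffh z (le_of_lt (by exact mem_ball_zero_iff.mp hz))).differentiableWithinAt
    · rw [closure_ball (0 : ℂ) (ne_of_gt (by exact_mod_cast hε))]
      intro z hz
      exact (hdiffh z (by exact mem_closedBall_zero_iff.mp hz)).continuousAt.continuousWithinAt
  have hball : HasFPowerSeriesOnBall h (cauchyPowerSeries h 0 εnn) 0 εnn :=
    hdc.hasFPowerSeriesOnBall hεnn0
  have hat : HasFPowerSeriesAt h (cauchyPowerSeries h 0 εnn) 0 := hball.hasFPowerSeriesAt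
  -- the circle integral equals the second coefficient
  have hcoeff : (cauchyPowerSeries h 0 εnn).coeff 2 =
      (2 * (Real.pi : ℂ) * I)⁻¹ * (∮ z in C(0, ε), f (m * z) / (f z) ^ 3) := by
    have h1 : (cauchyPowerSeries h 0 εnn).coeff 2 =
        (2 * (Real.pi : ℂ) * I)⁻¹ •
          ∮ z in C(0, (εnn : ℝ)), ((1 : ℂ) / (z - 0)) ^ 2 • (z - 0)⁻¹ • h z := by
      rw [FormalMultilinearSeries.coeff]
      exact cauchyPowerSeries_apply h 0 εnn 2 1
    rw [h1]
    have h2 : (∮ z in C(0, (εnn : ℝ)), ((1 : ℂ) / (z - 0)) ^ 2 • (z - 0)⁻¹ • h z) =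
        ∮ z in C(0, ε), f (m * z) / (f z) ^ 3 := by
      apply circleIntegral.integral_congr hε.le
      intro z hz
      have hzε : ‖z‖ = ε := by simpa [mem_sphere_iff_norm] using hz
      simp only [smul_eq_mul, sub_zero, hhdef]
      rw [hfzg z]
      ring
    rw [h2, smul_eq_mul]
  -- coefficient 2 in terms of iteratedDeriv 2 h 0
  have hc2 : (2 : ℂ) * (cauchyPowerSeries h 0 εnn).coeff 2 = iteratedDeriv 2 h 0 := by
    have h2 := coeff_eq_iteratedDeriv_aux hat 2
    norm_num [Nat.factorial] at h2
    exact h2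
  -- analyticity facts
  have hfan : AnalyticOnNhd ℂ f (ball (0 : ℂ) R) := hf.analyticOnNhd isOpen_ball
  have hgan : AnalyticOnNhd ℂ g (ball (0 : ℂ) R) := hgdiff.analyticOnNhd isOpen_ball
  have h0R : (0 : ℂ) ∈ ball (0 : ℂ) R := mem_ball_self hR
  -- deriv g 0 = b / 2
  have hdg0 : deriv g 0 = b / 2 := by
    obtain ⟨p, hp⟩ := hfan 0 h0R
    have hq : HasFPowerSeriesAt g p.fslope 0 := hp.has_fpower_series_dslope_fslope
    have h1 : deriv g 0 = p.fslope.coeff 1 := hq.deriv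
    have h2 : p.fslope.coeff 1 = p.coeff 2 := p.coeff_fslope
    have h3 : (2 : ℂ) * p.coeff 2 = b := by
      have h4 := coeff_eq_iteratedDeriv_aux hp 2
      norm_num [Nat.factorial] at h4
      exact h4
    rw [h1, h2, ← h3]
    ring
  -- derivative of h on the ball
  have hE : ∀ z ∈ ball (0 : ℂ) ε, HasDerivAt h
      ((deriv f (m * z) * m * (g z) ^ 3 -
        f (m * z) * ((3 : ℂ) * (g z) ^ 2 * deriv g z)) / ((g z) ^ 3) ^ 2) z := by
    intro z hz
    have hzε : ‖z‖ ≤ ε := le_of_lt (by simpa [mem_ball_zero_iff] using hz)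
    have h1 : HasDerivAt (fun w => f (m * w)) (deriv f (m * z) * m) z := by
      have hfd : HasDerivAt f (deriv f (m * z)) (m * z) :=
        (hf.differentiableAt (isOpen_ball.mem_nhds (hmemm z hzε))).hasDerivAt
      have hmd : HasDerivAt (fun w : ℂ => m * w) m z := by
        simpa using (hasDerivAt_id z).const_mul m
      exact hfd.comp z hmd
    have h2 : HasDerivAt g (deriv g z) z := (hdiffg z hzε).hasDerivAt
    have h3 : HasDerivAt (fun w => (g w) ^ 3) ((3 : ℂ) * (g z) ^ 2 * deriv g z) z := by
      have := h2.pow 3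
      norm_num at this
      exact this
    exact h1.div h3 (pow_ne_zero 3 (hgne z hzε))
  have hdh : deriv h =ᶠ[nhds (0 : ℂ)] fun z =>
      (deriv f (m * z) * m * (g z) ^ 3 -
        f (m * z) * ((3 : ℂ) * (g z) ^ 2 * deriv g z)) / ((g z) ^ 3) ^ 2 := by
    filter_upwards [isOpen_ball.mem_nhds (mem_ball_self hε)] with z hz
    exact (hE z hz).deriv
  -- compute iteratedDeriv 2 h 0
  have hiter : iteratedDeriv 2 h 0 = (m ^ 2 - 3 * m) * b / a ^ 3 := by
    rw [iteratedDeriv_succ, iteratedDeriv_one, hdh.deriv_eq]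
    -- HasDerivAt facts at 0
    have hdf_an : AnalyticAt ℂ (deriv f) 0 := hfan.deriv 0 h0R
    have hdg_an : AnalyticAt ℂ (deriv g) 0 := hgan.deriv 0 h0R
    have hb' : deriv (deriv f) 0 = b := by
      rw [hb, iteratedDeriv_succ, iteratedDeriv_one]
    have hmd : HasDerivAt (fun w : ℂ => m * w) m 0 := by
      simpa using (hasDerivAt_id (0 : ℂ)).const_mul m
    have w1 : HasDerivAt (fun z => deriv f (m * z)) (b * m) 0 := by
      have hfd : HasDerivAt (deriv f) (deriv (deriv f) (m * 0)) (m * 0) := by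
        rw [mul_zero]
        exact hdf_an.differentiableAt.hasDerivAt
      have h5 := hfd.comp 0 hmd
      rw [mul_zero, hb'] at h5
      exact h5
    have w2 : HasDerivAt g (b / 2) 0 := by
      rw [← hdg0]
      exact (hdiffg 0 (by simp [hε.le])).hasDerivAt
    have w3 : HasDerivAt (deriv g) (deriv (deriv g) 0) 0 :=
      hdg_an.differentiableAt.hasDerivAt
    have w4 : HasDerivAt (fun z => f (m * z)) (a * m) 0 := by
      have hfd : HasDerivAt f a (m * 0) := by
        rw [mul_zero]
        exact (hf.differentiableAt (isOpen_ball.mem_nhds h0R)).hasDerivAt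
      exact hfd.comp 0 hmd
    have wg3 : HasDerivAt (fun z => (g z) ^ 3) ((3 : ℂ) * (g 0) ^ 2 * (b / 2)) 0 := by
      have := w2.pow 3
      norm_num at this
      exact this
    have wg2 : HasDerivAt (fun z => (3 : ℂ) * (g z) ^ 2) ((3 : ℂ) * ((2 : ℂ) * (g 0) * (b / 2))) 0 := by
      have := (w2.pow 2).const_mul (3 : ℂ)
      norm_num at this
      exact this
    have wN : HasDerivAt
        (fun z => deriv f (m * z) * m * (g z) ^ 3 -
          f (m * z) * ((3 : ℂ) * (g z) ^ 2 * deriv g z))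
        ((b * m * m * (g 0) ^ 3 + deriv f (m * 0) * m * ((3 : ℂ) * (g 0) ^ 2 * (b / 2))) -
          (a * m * ((3 : ℂ) * (g 0) ^ 2 * deriv g 0) +
            f (m * 0) * ((3 : ℂ) * ((2 : ℂ) * (g 0) * (b / 2)) * deriv g 0 +
              (3 : ℂ) * (g 0) ^ 2 * deriv (deriv g) 0))) 0 :=
      ((w1.mul_const m).mul wg3).sub (w4.mul (wg2.mul w3))
    have wD : HasDerivAt (fun z => ((g z) ^ 3) ^ 2)
        ((2 : ℂ) * ((g 0) ^ 3) * ((3 : ℂ) * (g 0) ^ 2 * (b / 2))) 0 := by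
      have := wg3.pow 2
      norm_num at this
      exact this
    have hD0 : ((g 0) ^ 3) ^ 2 ≠ 0 := by
      rw [hg0]; exact pow_ne_zero 2 (pow_ne_zero 3 hf'0)
    have wE := wN.fun_div wD hD0
    rw [wE.deriv]
    simp only [mul_zero, hf0, hg0, hdg0, zero_mul]
    rw [← ha]
    field_simp
    ring
  -- put everything together
  have hfinal : (cauchyPowerSeries h 0 εnn).coeff 2 = (m ^ 2 - 3 * m) * b / a ^ 3 / 2 := by
    have h2 := hc2
    rw [hiter] at h2
    linear_combination h2 / 2
  rw [← hcoeff, hfinal]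
  field_simp
end

section
/- Let R > 0, let f be holomorphic on the disk {z ∈ ℂ : |z| < R} with f(0) = 0 and f′(0) ≠ 0, and let m ∈ ℂ. Then for all sufficiently small ε > 0 (in particular with max(1,|m|)·ε < R and f nonvanishing on {0 < |z| ≤ ε}), (1/(2πi)) ∮_{|z|=ε} f(mz)/f(z)⁴ dz = ((m³−4m)/6) · f‴(0)/f′(0)⁴ − ((2m²−5m)/2) · f″(0)²/f′(0)⁵. -/
open Complex Metric

/-- Lemma 2.6, case `n = 3`:
`Res_z f(mz)/f(z)⁴ = ((m³−4m)/6)·f'''(0)/f'(0)⁴ − ((2m²−5m)/2)·f''(0)²/f'(0)⁵`. -/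
theorem residue_fmz_over_fz_fourth
    (R : ℝ) (hR : 0 < R) (f : ℂ → ℂ)
    (hf : DifferentiableOn ℂ f (ball (0 : ℂ) R))
    (hf0 : f 0 = 0) (hf'0 : deriv f 0 ≠ 0) (m : ℂ) :
    ∀ ε : ℝ, 0 < ε → max 1 ‖m‖ * ε < R →
      (∀ z : ℂ, z ≠ 0 → ‖z‖ ≤ ε → f z ≠ 0) →
      (2 * (Real.pi : ℂ) * I)⁻¹ * (∮ z in C(0, ε), f (m * z) / (f z) ^ 4) =
        (m ^ 3 - 4 * m) / 6 * (iteratedDeriv 3 f 0 / (deriv f 0) ^ 4) -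
          (2 * m ^ 2 - 5 * m) / 2 * ((iteratedDeriv 2 f 0) ^ 2 / (deriv f 0) ^ 5) := by
  intro ε hε hεR hfz
  have hmem : (0:ℂ) ∈ ball (0:ℂ) R := by simpa using hR
  have hball : ball (0:ℂ) R ∈ nhds (0:ℂ) := isOpen_ball.mem_nhds hmem
  set u : ℂ → ℂ := dslope f 0 with hu_def
  have hu : DifferentiableOn ℂ u (ball (0:ℂ) R) :=
    (differentiableOn_dslope hball).mpr hf
  have huA : AnalyticOnNhd ℂ u (ball (0:ℂ) R) := hu.analyticOnNhd isOpen_ball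
  have hfu : ∀ z : ℂ, f z = z * u z := by
    intro z
    rcases eq_or_ne z 0 with rfl | hz
    · simpa using hf0
    · rw [hu_def, dslope_of_ne _ hz, slope_def_field]
      field_simp [hf0]
      rw [hf0, sub_zero, sub_zero, mul_comm]
  have hu0 : u 0 = deriv f 0 := dslope_same f 0
  have hεR' : ε < R := by
    have h1 : (1:ℝ) * ε ≤ max 1 ‖m‖ * ε :=
      mul_le_mul_of_nonneg_right (le_max_left _ _) hε.le
    linarith
  have hmz : ∀ z : ℂ, ‖z‖ ≤ ε → m * z ∈ ball (0:ℂ) R := by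
    intro z hz
    simp only [mem_ball, dist_zero_right, norm_mul]
    calc ‖m‖ * ‖z‖ ≤ max 1 ‖m‖ * ε :=
          mul_le_mul (le_max_right _ _) hz (norm_nonneg _) (by positivity)
      _ < R := hεR
  have hzR : ∀ z : ℂ, ‖z‖ ≤ ε → z ∈ ball (0:ℂ) R := by
    intro z hz
    simp only [mem_ball, dist_zero_right]
    exact lt_of_le_of_lt hz hεR'
  have huz : ∀ z : ℂ, ‖z‖ ≤ ε → u z ≠ 0 := by
    intro z hz
    rcases eq_or_ne z 0 with rfl | h0
    · rw [hu0]; exact hf'0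
    · intro hcontra
      exact hfz z h0 hz (by rw [hfu z, hcontra, mul_zero])
  set h : ℂ → ℂ := fun z => m * u (m * z) / u z ^ 4 with hh_def
  set G : ℂ → ℂ := fun z =>
    (m * (deriv u (m*z) * m) * u z ^ 4 - m * u (m*z) * ((4:ℂ) * u z ^ 3 * deriv u z))
      / (u z ^ 4) ^ 2 with hG_def
  have hF : ∀ z : ℂ, ‖z‖ ≤ ε → HasDerivAt h (G z) z := by
    intro z hz
    have h1 : HasDerivAt u (deriv u (m*z)) (m*z) :=
      (huA (m*z) (hmz z hz)).differentiableAt.hasDerivAt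
    have h2 : HasDerivAt u (deriv u z) z :=
      (huA z (hzR z hz)).differentiableAt.hasDerivAt
    have h3 : HasDerivAt (fun w : ℂ => m * w) m z := by
      simpa using (hasDerivAt_id z).const_mul m
    have h4 : HasDerivAt (fun w : ℂ => u (m * w)) (deriv u (m*z) * m) z := h1.comp z h3
    have h5 := (h4.const_mul m).div (h2.pow 4) (pow_ne_zero 4 (huz z hz))
    have h5' : HasDerivAt h _ z := h5
    convert h5' using 1 <;> norm_num [hG_def]
  have hhd : ∀ z : ℂ, ‖z‖ ≤ ε → DifferentiableAt ℂ h z := fun z hz =>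
    (hF z hz).differentiableAt
  have hcoe : (((⟨ε, hε.le⟩ : NNReal) : ℝ)) = ε := rfl
  have hdiff : DifferentiableOn ℂ h (closedBall (0:ℂ) ((⟨ε, hε.le⟩ : NNReal) : ℝ)) := by
    intro z hz
    refine (hhd z ?_).differentiableWithinAt
    rw [hcoe] at hz
    simpa [dist_zero_right] using hz
  have hps := hdiff.hasFPowerSeriesOnBall (R := ⟨ε, hε.le⟩) (by exact_mod_cast hε)
  have hps : HasFPowerSeriesOnBall h (cauchyPowerSeries h 0 ε) 0 (ENNReal.ofNNReal ⟨ε, hε.le⟩) := hps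
  have hint : (∮ z in C(0, ε), f (m * z) / (f z) ^ 4)
      = ∮ z in C(0, ε), ((1:ℂ) / (z - 0)) ^ 2 • (z - 0)⁻¹ • h z := by
    apply circleIntegral.integral_congr hε.le
    intro z hz
    simp only [mem_sphere, dist_zero_right] at hz
    have hz0 : z ≠ 0 := by
      intro h0; rw [h0] at hz; simp at hz; linarith
    have hzε : ‖z‖ ≤ ε := le_of_eq hz
    have huzne := huz z hzε
    show f (m * z) / f z ^ 4 = ((1:ℂ) / (z - 0)) ^ 2 • (z - 0)⁻¹ • h z
    rw [hfu (m*z), hfu z, hh_def]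
    simp only [smul_eq_mul, sub_zero]
    field_simp
  have hcoeff : (2 * (Real.pi : ℂ) * I)⁻¹ * (∮ z in C(0, ε), f (m * z) / (f z) ^ 4)
      = cauchyPowerSeries h 0 ε 2 (fun _ => 1) := by
    rw [cauchyPowerSeries_apply, hint]
    simp [smul_eq_mul]
  have hc2h : cauchyPowerSeries h 0 ε 2 (fun _ => 1) = iteratedDeriv 2 h 0 / 2 := by
    have h2 : (2:ℂ) * cauchyPowerSeries h 0 ε 2 (fun _ => 1) = iteratedDeriv 2 h 0 := by
      rw [iteratedDeriv_eq_iteratedFDeriv]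
      have h2f := hps.factorial_smul (1:ℂ) 2
      rw [← h2f]
      norm_num [Nat.factorial]
    rw [← h2]; ring
  -- second derivative of h at 0
  have hEq : deriv h =ᶠ[nhds (0:ℂ)] G := by
    filter_upwards [Metric.closedBall_mem_nhds (0:ℂ) hε] with z hz
    exact (hF z (by simpa [dist_zero_right] using hz)).deriv
  have hdh : deriv (deriv h) 0 = deriv G 0 := hEq.deriv_eq
  -- compute deriv G 0
  have hduA : AnalyticOnNhd ℂ (deriv u) (ball (0:ℂ) R) := huA.deriv
  have hu_at : HasDerivAt u (deriv u 0) 0 := (huA 0 hmem).differentiableAt.hasDerivAt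
  have hdu_at : HasDerivAt (deriv u) (deriv (deriv u) 0) 0 :=
    (hduA 0 hmem).differentiableAt.hasDerivAt
  have hu_at' : HasDerivAt u (deriv u 0) (m * 0) := by rwa [mul_zero]
  have hdu_at' : HasDerivAt (deriv u) (deriv (deriv u) 0) (m * 0) := by rwa [mul_zero]
  have h3 : HasDerivAt (fun w : ℂ => m * w) m 0 := by
    simpa using (hasDerivAt_id (0:ℂ)).const_mul m
  have humz : HasDerivAt (fun w : ℂ => u (m * w)) (deriv u 0 * m) 0 := hu_at'.comp 0 h3
  have hdumz : HasDerivAt (fun w : ℂ => deriv u (m * w)) (deriv (deriv u) 0 * m) 0 :=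
    hdu_at'.comp 0 h3
  have t1 : HasDerivAt (fun z : ℂ => m * (deriv u (m*z) * m))
      (m * (deriv (deriv u) 0 * m * m)) 0 := (hdumz.mul_const m).const_mul m
  have t2 : HasDerivAt (fun z : ℂ => u z ^ 4) ((4:ℕ) * u 0 ^ 3 * deriv u 0) 0 := hu_at.pow 4
  have t3 : HasDerivAt (fun z : ℂ => m * u (m*z)) (m * (deriv u 0 * m)) 0 := humz.const_mul m
  have t4a : HasDerivAt (fun z : ℂ => (4:ℂ) * u z ^ 3) ((4:ℂ) * ((3:ℕ) * u 0 ^ 2 * deriv u 0)) 0 :=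
    (hu_at.pow 3).const_mul 4
  have t4 := t4a.mul hdu_at
  have hN := (t1.mul t2).sub (t3.mul t4)
  have hD : HasDerivAt (fun z : ℂ => (u z ^ 4) ^ 2)
      ((2:ℕ) * (u 0 ^ 4) ^ 1 * ((4:ℕ) * u 0 ^ 3 * deriv u 0)) 0 := (hu_at.pow 4).pow 2
  have hDne : ((u 0 ^ 4) ^ 2 : ℂ) ≠ 0 := pow_ne_zero 2 (pow_ne_zero 4 (huz 0 (by simp [hε.le])))
  have hG0 := hN.div hD hDne
  have hGd : HasDerivAt G _ 0 := hG0
  have hderivG := hGd.deriv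
  -- power series coefficients of f and u
  obtain ⟨p, hp⟩ := hf.analyticOnNhd isOpen_ball 0 hmem
  have hq : HasFPowerSeriesAt u p.fslope 0 := hp.has_fpower_series_dslope_fslope
  have hb : deriv u 0 = p.coeff 2 := by
    rw [hq.deriv]
    simp [FormalMultilinearSeries.apply_eq_pow_smul_coeff]
  have hfs2 : ∀ (g : ℂ → ℂ) (q : FormalMultilinearSeries ℂ ℂ ℂ), HasFPowerSeriesAt g q 0 →
      ∀ n : ℕ, iteratedDeriv n g 0 = (n.factorial : ℂ) * q.coeff n := by
    intro g q hg n
    obtain ⟨r, hr⟩ := hg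
    have := hr.factorial_smul (1:ℂ) n
    rw [iteratedDeriv_eq_iteratedFDeriv, ← this]
    simp [FormalMultilinearSeries.apply_eq_pow_smul_coeff, nsmul_eq_mul]
  have hc : deriv (deriv u) 0 = 2 * p.coeff 3 := by
    have h1 : iteratedDeriv 2 u 0 = deriv (deriv u) 0 := by
      rw [iteratedDeriv_succ, iteratedDeriv_one]
    have h2 := hfs2 u p.fslope hq 2
    rw [h1] at h2
    rw [h2, FormalMultilinearSeries.coeff_fslope]
    norm_num
  have h2f : iteratedDeriv 2 f 0 = 2 * p.coeff 2 := by
    have := hfs2 f p hp 2; rw [this]; norm_num [Nat.factorial]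
  have h3f : iteratedDeriv 3 f 0 = 6 * p.coeff 3 := by
    have := hfs2 f p hp 3; rw [this]; norm_num [Nat.factorial]
  -- assemble
  have hi2 : iteratedDeriv 2 h 0 = deriv (deriv h) 0 := by
    rw [iteratedDeriv_succ, iteratedDeriv_one]
  rw [hcoeff, hc2h, hi2, hdh, hderivG, h2f, h3f]
  simp only [mul_zero, Pi.mul_apply, Pi.sub_apply]
  rw [hb, hc, ← hu0]
  have ha : u 0 ≠ 0 := hu0 ▸ hf'0
  field_simp
  ring
end

section
/- For all integers m ≥ 1 and N ≥ 2 and every real ε with 0 < ε < 1/m, (1/(2πi)) ∮_{|z|=ε} m(1+z)^N / (z^{N−1}(1+mz)) dz = ∑_{k=2}^{N} (−1)^k · binom(N,k) · m^{k−1}. -/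
open Complex
open Metric

lemma aux_ne {m : ℕ} {ε : ℝ} (hm : 1 ≤ m) (hεm : ε < 1 / m) {z : ℂ} (hz : ‖z‖ ≤ ε) :
    1 + (m : ℂ) * z ≠ 0 := by
  have hm0 : (0 : ℝ) < m := by exact_mod_cast hm
  intro h
  have h1 : (m : ℂ) * z = -1 := by linear_combination h
  have h2 : ‖(m : ℂ) * z‖ = 1 := by rw [h1]; simp
  rw [norm_mul, Complex.norm_natCast] at h2
  have hme : (m : ℝ) * ε < 1 := by
    rw [lt_div_iff₀ hm0] at hεm; linarith
  nlinarith [norm_nonneg z]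

lemma sphere_ne_zero {ε : ℝ} (hε : 0 < ε) {z : ℂ} (hz : z ∈ sphere (0 : ℂ) ε) : z ≠ 0 := by
  rw [mem_sphere_zero_iff_norm] at hz
  intro h; rw [h] at hz; simp at hz; linarith

lemma circleIntegral_sum {ι : Type*} (s : Finset ι) (f : ι → ℂ → ℂ) (c : ℂ) (R : ℝ)
    (h : ∀ i ∈ s, CircleIntegrable (f i) c R) :
    (∮ z in C(c, R), ∑ i ∈ s, f i z) = ∑ i ∈ s, ∮ z in C(c, R), f i z := by
  simp only [circleIntegral, Finset.smul_sum]
  rw [intervalIntegral.integral_finset_sum]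
  intro i hi
  exact (h i hi).out

lemma powA (N j : ℕ) {ε : ℝ} (hε : 0 < ε) :
    (∮ z in C(0, ε), (1 + z) ^ N / z ^ (j + 1)) = 2 * (Real.pi : ℂ) * I * (N.choose j : ℂ) := by
  have key : ∀ i : ℕ, (∮ z in C(0, ε), (z - 0) ^ ((i : ℤ) - ((j + 1 : ℕ) : ℤ))) =
      if i = j then 2 * (Real.pi : ℂ) * I else 0 := by
    intro i
    by_cases h : i = j
    · subst h
      simp only [if_true]
      have : ((i : ℤ) - ((i + 1 : ℕ) : ℤ)) = -1 := by push_cast; ring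
      rw [this]
      have h0 : (0 : ℂ) ∈ ball (0 : ℂ) ε := by simpa using hε
      simpa [zpow_neg_one] using circleIntegral.integral_sub_inv_of_mem_ball h0
    · rw [if_neg h]
      exact circleIntegral.integral_sub_zpow_of_ne (by omega) _ _ _
  have h1 : Set.EqOn (fun z : ℂ => (1 + z) ^ N / z ^ (j + 1))
      (fun z : ℂ => ∑ i ∈ Finset.range (N + 1),
        (N.choose i : ℂ) * (z - 0) ^ ((i : ℤ) - ((j + 1 : ℕ) : ℤ))) (sphere 0 ε) := by
    intro z hz
    have hz0 : z ≠ 0 := sphere_ne_zero hε hz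
    simp only
    rw [add_comm (1 : ℂ) z, add_pow, Finset.sum_div]
    refine Finset.sum_congr rfl fun i hi => ?_
    rw [sub_zero, zpow_sub₀ hz0, zpow_natCast, zpow_natCast]
    ring
  rw [circleIntegral.integral_congr hε.le h1, circleIntegral_sum]
  · simp only [circleIntegral.integral_const_mul, key, mul_ite, mul_zero]
    rw [Finset.sum_ite_eq' (Finset.range (N + 1)) j]
    by_cases hj : j ∈ Finset.range (N + 1)
    · rw [if_pos hj]; ring
    · rw [if_neg hj]
      have : N.choose j = 0 := Nat.choose_eq_zero_of_lt (by simpa using hj)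
      rw [this]; simp
  · intro i hi
    refine ContinuousOn.circleIntegrable hε.le ?_
    refine continuousOn_const.mul ?_
    intro z hz
    have hz0 : z ≠ 0 := sphere_ne_zero hε hz
    refine ContinuousAt.continuousWithinAt ?_
    exact ((continuousAt_id.sub continuousAt_const).zpow₀ _ (Or.inl (by simpa using hz0)))

lemma resid_aux (m N : ℕ) (hm : 1 ≤ m) {ε : ℝ} (hε : 0 < ε) (hεm : ε < 1 / m) :
    ∀ j : ℕ, (∮ z in C(0, ε), (1 + z) ^ N / (z ^ j * (1 + (m : ℂ) * z))) =
      2 * (Real.pi : ℂ) * I *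
        ∑ t ∈ Finset.Icc 1 j, (-(m : ℂ)) ^ (j - t) * (N.choose (t - 1) : ℂ) := by
  intro j
  induction j with
  | zero =>
    have he : Finset.Icc 1 0 = (∅ : Finset ℕ) := by simp
    rw [he, Finset.sum_empty, mul_zero]
    apply Complex.circleIntegral_eq_zero_of_differentiable_on_off_countable hε.le
      Set.countable_empty
    · intro z hz
      have hz1 : 1 + (m : ℂ) * z ≠ 0 :=
        aux_ne hm hεm (by simpa using mem_closedBall_zero_iff.mp hz)
      refine ContinuousAt.continuousWithinAt ?_
      apply ContinuousAt.div (by fun_prop) (by fun_prop)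
      simpa using hz1
    · intro z hz
      have hz1 : 1 + (m : ℂ) * z ≠ 0 :=
        aux_ne hm hεm (le_of_lt (by simpa using mem_ball_zero_iff.mp hz.1))
      apply DifferentiableAt.div (by fun_prop) (by fun_prop)
      simpa using hz1
  | succ j ih =>
    have heq : Set.EqOn (fun z : ℂ => (1 + z) ^ N / (z ^ (j + 1) * (1 + (m : ℂ) * z)))
        (fun z : ℂ => (1 + z) ^ N / z ^ (j + 1)
          - (m : ℂ) * ((1 + z) ^ N / (z ^ j * (1 + (m : ℂ) * z)))) (sphere 0 ε) := by
      intro z hz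
      have hz0 : z ≠ 0 := sphere_ne_zero hε hz
      have hz1 : 1 + (m : ℂ) * z ≠ 0 :=
        aux_ne hm hεm (le_of_eq (mem_sphere_zero_iff_norm.mp hz))
      simp only
      have hz1' : 1 + z * (m : ℂ) ≠ 0 := by rwa [mul_comm]
      field_simp
      ring
    have hint1 : CircleIntegrable (fun z : ℂ => (1 + z) ^ N / z ^ (j + 1)) 0 ε := by
      refine ContinuousOn.circleIntegrable hε.le ?_
      intro z hz
      have hz0 : z ≠ 0 := sphere_ne_zero hε hz
      exact ContinuousAt.continuousWithinAt
        (ContinuousAt.div (by fun_prop) (by fun_prop) (pow_ne_zero _ hz0))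
    have hint2 : CircleIntegrable
        (fun z : ℂ => (m : ℂ) * ((1 + z) ^ N / (z ^ j * (1 + (m : ℂ) * z)))) 0 ε := by
      refine ContinuousOn.circleIntegrable hε.le ?_
      intro z hz
      have hz0 : z ≠ 0 := sphere_ne_zero hε hz
      have hz1 : 1 + (m : ℂ) * z ≠ 0 :=
        aux_ne hm hεm (le_of_eq (mem_sphere_zero_iff_norm.mp hz))
      exact ContinuousAt.continuousWithinAt
        (ContinuousAt.mul continuousAt_const
          (ContinuousAt.div (by fun_prop) (by fun_prop)
            (mul_ne_zero (pow_ne_zero _ hz0) hz1)))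
    rw [circleIntegral.integral_congr hε.le heq,
      circleIntegral.integral_sub hint1 hint2,
      circleIntegral.integral_const_mul, ih, powA N j hε]
    have hsum : ∑ t ∈ Finset.Icc 1 (j + 1), (-(m : ℂ)) ^ (j + 1 - t) * (N.choose (t - 1) : ℂ)
        = (N.choose j : ℂ) +
          (-(m : ℂ)) * ∑ t ∈ Finset.Icc 1 j, (-(m : ℂ)) ^ (j - t) * (N.choose (t - 1) : ℂ) := by
      rw [Finset.sum_Icc_succ_top (by omega : 1 ≤ j + 1)]
      have hc : ∀ t ∈ Finset.Icc 1 j, (-(m : ℂ)) ^ (j + 1 - t) * (N.choose (t - 1) : ℂ)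
          = (-(m : ℂ)) * ((-(m : ℂ)) ^ (j - t) * (N.choose (t - 1) : ℂ)) := by
        intro t ht
        simp only [Finset.mem_Icc] at ht
        have h1 : j + 1 - t = (j - t) + 1 := by omega
        rw [h1, pow_succ]
        ring
      rw [Finset.sum_congr rfl hc, ← Finset.mul_sum]
      simp only [Nat.sub_self, pow_zero, one_mul, Nat.add_sub_cancel]
      ring
    rw [hsum]
    ring

/-- The Euler number of a smooth degree-`m` hypersurface in `ℂP^{N-1}`, expressed
as a residue, equals `∑_{k=2}^N (−1)^k C(N,k) m^{k−1}`. -/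
theorem euler_number_hypersurface
    (m N : ℕ) (hm : 1 ≤ m) (hN : 2 ≤ N) (ε : ℝ) (hε : 0 < ε) (hεm : ε < 1 / m) :
    (2 * (Real.pi : ℂ) * I)⁻¹ *
        (∮ z in C(0, ε), (m : ℂ) * (1 + z) ^ N / (z ^ (N - 1) * (1 + (m : ℂ) * z))) =
      ∑ k ∈ Finset.Icc 2 N, (-1 : ℂ) ^ k * (N.choose k : ℂ) * (m : ℂ) ^ (k - 1) := by
  have h1 : (∮ z in C(0, ε), (m : ℂ) * (1 + z) ^ N / (z ^ (N - 1) * (1 + (m : ℂ) * z)))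
      = (m : ℂ) * ∮ z in C(0, ε), (1 + z) ^ N / (z ^ (N - 1) * (1 + (m : ℂ) * z)) := by
    rw [← circleIntegral.integral_const_mul]
    congr 1
    funext z
    rw [mul_div_assoc]
  rw [h1, resid_aux m N hm hε hεm (N - 1)]
  have h2πI : (2 * (Real.pi : ℂ) * I) ≠ 0 := by
    simp [Real.pi_ne_zero, I_ne_zero]
  rw [show (2 * (Real.pi : ℂ) * I)⁻¹ * ((m : ℂ) * (2 * (Real.pi : ℂ) * I *
      ∑ t ∈ Finset.Icc 1 (N - 1), (-(m : ℂ)) ^ (N - 1 - t) * (N.choose (t - 1) : ℂ)))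
    = (m : ℂ) * ∑ t ∈ Finset.Icc 1 (N - 1),
        (-(m : ℂ)) ^ (N - 1 - t) * (N.choose (t - 1) : ℂ) by
      field_simp]
  rw [Finset.mul_sum]
  refine Finset.sum_nbij' (fun t => N + 1 - t) (fun k => N + 1 - k) ?_ ?_ ?_ ?_ ?_
  · intro t ht; simp only [Finset.mem_Icc] at *; omega
  · intro k hk; simp only [Finset.mem_Icc] at *; omega
  · intro t ht; simp only [Finset.mem_Icc] at ht; omega
  · intro k hk; simp only [Finset.mem_Icc] at hk; omega
  · intro t ht
    simp only [Finset.mem_Icc] at ht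
    obtain ⟨ht1, ht2⟩ := ht
    have e1 : N.choose (N + 1 - t) = N.choose (t - 1) := by
      have h : N + 1 - t = N - (t - 1) := by omega
      rw [h, Nat.choose_symm (by omega)]
    have e3 : N + 1 - t - 1 = (N - 1 - t) + 1 := by omega
    have e2 : N + 1 - t = (N - 1 - t) + 2 := by omega
    rw [e1, e3, e2, neg_pow]
    ring
end

section
/- Fix an integer m ≥ 1 and a real ε with 0 < ε < 1/m, and for each integer N ≥ 2 set χ_N = (1/(2πi)) ∮_{|z|=ε} m(1+z)^N/(z^{N−1}(1+mz)) dz. Then there exists δ > 0 such that for every t ∈ ℂ with |t| < δ, the series ∑_{N=2}^∞ χ_N · t^{N−1} converges with sum equal to mt / ((1−t)²(1+(m−1)t)). -/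
open Complex Finset Metric

private lemma circleIntegral_add' {f g : ℂ → ℂ} {c : ℂ} {R : ℝ} (hf : CircleIntegrable f c R)
    (hg : CircleIntegrable g c R) :
    (∮ z in C(c, R), (f z + g z)) = (∮ z in C(c, R), f z) + ∮ z in C(c, R), g z := by
  simp only [circleIntegral, smul_add]
  exact intervalIntegral.integral_add hf.out hg.out

private lemma circleIntegral_finset_sum' {ι : Type*} (s : Finset ι) {f : ι → ℂ → ℂ} {c : ℂ}
    {R : ℝ} (h : ∀ i ∈ s, CircleIntegrable (f i) c R) :
    (∮ z in C(c, R), ∑ i ∈ s, f i z) = ∑ i ∈ s, ∮ z in C(c, R), f i z := by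
  simp only [circleIntegral, Finset.smul_sum]
  exact intervalIntegral.integral_finset_sum fun i hi => (h i hi).out

/-- Partial-fraction style decomposition of the integrand. -/
private lemma integrand_decomp (m n : ℕ) (z : ℂ) (hz : z ≠ 0) (hz1 : 1 + (m:ℂ) * z ≠ 0) :
    (m : ℂ) * (1 + z) ^ (n + 2) / (z ^ (n + 1) * (1 + (m : ℂ) * z)) =
      (∑ j ∈ range (n + 1), ∑ k ∈ range (n + 3),
        ((m : ℂ) * (-(m:ℂ)) ^ j * ((n + 2).choose k : ℂ)) *
          z ^ ((k : ℤ) + (j : ℤ) - ((n : ℤ) + 1)))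
      + (-(m:ℂ)) ^ (n + 1) * m * (1 + z) ^ (n + 2) / (1 + (m:ℂ) * z) := by
  have hzp : z ^ (n + 1) ≠ 0 := pow_ne_zero _ hz
  have hgeom : (∑ j ∈ range (n + 1), (-(m:ℂ) * z) ^ j) * (1 + (m:ℂ) * z)
      = 1 - (-(m:ℂ) * z) ^ (n + 1) := by
    linear_combination -geom_sum_mul (-(m:ℂ) * z) (n + 1)
  have hterm : ∀ k j : ℕ, z ^ ((k : ℤ) + (j : ℤ) - ((n : ℤ) + 1))
      = z ^ k * z ^ j / z ^ (n + 1) := by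
    intro k j
    have he : ((k : ℤ) + (j : ℤ) - ((n : ℤ) + 1)) = (k : ℤ) + (j : ℤ) - ((n + 1 : ℕ) : ℤ) := by
      push_cast; ring
    rw [he, zpow_sub₀ hz, zpow_add₀ hz, zpow_natCast, zpow_natCast, zpow_natCast]
  have hbin : ((1 : ℂ) + z) ^ (n + 2) = ∑ k ∈ range (n + 3), ((n + 2).choose k : ℂ) * z ^ k := by
    rw [add_comm, add_pow]
    exact Finset.sum_congr rfl fun k _ => by ring
  have hDS : (∑ j ∈ range (n + 1), ∑ k ∈ range (n + 3),
        ((m : ℂ) * (-(m:ℂ)) ^ j * ((n + 2).choose k : ℂ)) *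
          z ^ ((k : ℤ) + (j : ℤ) - ((n : ℤ) + 1)))
      = (m : ℂ) * (∑ j ∈ range (n + 1), (-(m:ℂ) * z) ^ j) * ((1 + z) ^ (n + 2) / z ^ (n + 1)) := by
    rw [mul_assoc, Finset.sum_mul, Finset.mul_sum]
    refine Finset.sum_congr rfl fun j _ => ?_
    rw [hbin, div_eq_mul_inv, Finset.sum_mul, Finset.mul_sum, Finset.mul_sum]
    refine Finset.sum_congr rfl fun k _ => ?_
    rw [hterm k j]
    ring
  rw [hDS]
  have key : (m : ℂ) * (1 + z) ^ (n + 2) =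
      ((m : ℂ) * (∑ j ∈ range (n + 1), (-(m:ℂ) * z) ^ j) * (1 + z) ^ (n + 2)) * (1 + (m:ℂ) * z)
      + ((-(m:ℂ)) ^ (n + 1) * m * (1 + z) ^ (n + 2)) * z ^ (n + 1) := by
    linear_combination (-(m:ℂ) * (1 + z) ^ (n + 2)) * hgeom
  rw [mul_div_assoc', div_add_div _ _ hzp hz1,
    div_eq_div_iff (mul_ne_zero hzp hz1) (mul_ne_zero hzp hz1)]
  linear_combination (z ^ (n + 1) * (1 + (m:ℂ) * z)) * key

/-- Evaluation of the residue sum in closed form. -/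
private lemma key_sum (m n : ℕ) (hm : 1 ≤ m) :
    (∑ j ∈ range (n + 1), (m : ℂ) * (-(m:ℂ)) ^ j * ((n + 2).choose (n - j) : ℂ))
      = ((1 - (m : ℂ)) ^ (n + 2) - 1 + m * (n + 2)) / m := by
  have hm0 : (m : ℂ) ≠ 0 := Nat.cast_ne_zero.mpr (by omega)
  rw [eq_div_iff hm0]
  have hrefl := Finset.sum_range_reflect
    (fun j => (m : ℂ) * (-(m:ℂ)) ^ (n - j) * ((n + 2).choose j : ℂ)) (n + 1)
  have hL : (∑ j ∈ range (n + 1), (m : ℂ) * (-(m:ℂ)) ^ j * ((n + 2).choose (n - j) : ℂ))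
      = ∑ j ∈ range (n + 1), (m : ℂ) * (-(m:ℂ)) ^ (n - j) * ((n + 2).choose j : ℂ) := by
    rw [← hrefl]
    refine Finset.sum_congr rfl fun j hj => ?_
    rw [mem_range] at hj
    have h1 : n + 1 - 1 - j = n - j := by omega
    have h2 : n - (n - j) = j := by omega
    rw [h1, h2]
  rw [hL, Finset.sum_mul]
  have hbin2 : ((1 : ℂ) - m) ^ (n + 2)
      = ∑ j ∈ range (n + 3), (-(m:ℂ)) ^ (n + 2 - j) * ((n + 2).choose j : ℂ) := by
    have h : ((1 : ℂ) - m) = 1 + (-(m:ℂ)) := by ring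
    rw [h, add_pow]
    exact Finset.sum_congr rfl fun k _ => by rw [one_pow]; ring
  have e1 : n + 2 - (n + 1) = 1 := by omega
  have e2 : n + 2 - (n + 2) = 0 := by omega
  have e3 : (n + 2).choose (n + 1) = n + 2 := by
    simpa using Nat.choose_succ_self_right (n + 1)
  have e4 : (n + 2).choose (n + 2) = 1 := Nat.choose_self _
  have hcongr : ∀ j ∈ range (n + 1),
      (m : ℂ) * (-(m:ℂ)) ^ (n - j) * ((n + 2).choose j : ℂ) * m
        = (-(m:ℂ)) ^ (n + 2 - j) * ((n + 2).choose j : ℂ) := by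
    intro j hj
    rw [mem_range] at hj
    have h : n + 2 - j = (n - j) + 2 := by omega
    rw [h, pow_add]
    ring
  rw [Finset.sum_congr rfl hcongr]
  have hsplit : (∑ j ∈ range (n + 3), (-(m:ℂ)) ^ (n + 2 - j) * ((n + 2).choose j : ℂ))
      = (∑ j ∈ range (n + 1), (-(m:ℂ)) ^ (n + 2 - j) * ((n + 2).choose j : ℂ))
        + (-(m:ℂ)) * (n + 2 : ℂ) + 1 := by
    rw [Finset.sum_range_succ, Finset.sum_range_succ, e1, e2, e3, e4]
    push_cast; ring
  rw [hbin2, hsplit]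
  ring

/-- Residue computation: value of the circle integral. -/
private lemma integral_eval (m n : ℕ) (hm : 1 ≤ m) (ε : ℝ) (hε : 0 < ε) (hεm : ε < 1 / m) :
    (∮ z in C(0, ε), (m : ℂ) * (1 + z) ^ (n + 2) / (z ^ (n + 1) * (1 + (m : ℂ) * z)))
      = (2 * (Real.pi : ℂ) * I) *
        (((1 - (m : ℂ)) ^ (n + 2) - 1 + m * (n + 2)) / m) := by
  have hm0 : (0 : ℝ) < m := by exact_mod_cast hm
  have hmε : (m : ℝ) * ε < 1 := by
    rw [lt_div_iff₀ hm0] at hεm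
    linarith
  have hden : ∀ z : ℂ, ‖z‖ ≤ ε → 1 + (m : ℂ) * z ≠ 0 := by
    intro z hz h0
    have h1 : (m : ℂ) * z = -1 := by linear_combination h0
    have h2 : ‖(m : ℂ) * z‖ = 1 := by rw [h1]; simp
    rw [norm_mul, Complex.norm_natCast] at h2
    nlinarith [norm_nonneg z]
  have hsph : ∀ z : ℂ, z ∈ sphere (0 : ℂ) ε → z ≠ 0 := by
    intro z hz h0
    rw [mem_sphere_zero_iff_norm, h0, norm_zero] at hz
    linarith
  have hid : ∀ z ∈ sphere (0 : ℂ) ε,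
      (m : ℂ) * (1 + z) ^ (n + 2) / (z ^ (n + 1) * (1 + (m : ℂ) * z)) =
      (∑ j ∈ range (n + 1), ∑ k ∈ range (n + 3),
        ((m : ℂ) * (-(m:ℂ)) ^ j * ((n + 2).choose k : ℂ)) *
          z ^ ((k : ℤ) + (j : ℤ) - ((n : ℤ) + 1)))
      + (-(m:ℂ)) ^ (n + 1) * m * (1 + z) ^ (n + 2) / (1 + (m:ℂ) * z) := by
    intro z hzs
    refine integrand_decomp m n z (hsph z hzs) ?_
    refine hden z ?_
    rw [mem_sphere_zero_iff_norm] at hzs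
    exact hzs.le
  have hIntMon : ∀ (a : ℂ) (d : ℤ), CircleIntegrable (fun z : ℂ => a * z ^ d) 0 ε := by
    intro a d
    refine ContinuousOn.circleIntegrable hε.le ?_
    exact continuousOn_const.mul (continuousOn_id.zpow₀ d fun z hz => Or.inl (hsph z hz))
  have hIntInner : ∀ j : ℕ, CircleIntegrable (fun z : ℂ => ∑ k ∈ range (n + 3),
      ((m : ℂ) * (-(m:ℂ)) ^ j * ((n + 2).choose k : ℂ)) *
        z ^ ((k : ℤ) + (j : ℤ) - ((n : ℤ) + 1))) 0 ε := by
    intro j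
    refine ContinuousOn.circleIntegrable hε.le ?_
    refine continuousOn_finset_sum _ fun k _ => ?_
    exact continuousOn_const.mul (continuousOn_id.zpow₀ _ fun z hz => Or.inl (hsph z hz))
  have hIntDS : CircleIntegrable (fun z : ℂ => ∑ j ∈ range (n + 1), ∑ k ∈ range (n + 3),
      ((m : ℂ) * (-(m:ℂ)) ^ j * ((n + 2).choose k : ℂ)) *
        z ^ ((k : ℤ) + (j : ℤ) - ((n : ℤ) + 1))) 0 ε := by
    refine ContinuousOn.circleIntegrable hε.le ?_
    refine continuousOn_finset_sum _ fun j _ => continuousOn_finset_sum _ fun k _ => ?_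
    exact continuousOn_const.mul (continuousOn_id.zpow₀ _ fun z hz => Or.inl (hsph z hz))
  have hcontF : ContinuousOn (fun z : ℂ =>
      (-(m:ℂ)) ^ (n + 1) * m * (1 + z) ^ (n + 2) / (1 + (m:ℂ) * z)) (closedBall (0:ℂ) ε) := by
    refine ContinuousOn.div ?_ ?_ ?_
    · exact continuousOn_const.mul ((continuousOn_const.add continuousOn_id).pow _)
    · exact continuousOn_const.add (continuousOn_const.mul continuousOn_id)
    · intro z hz
      exact hden z (by rwa [mem_closedBall_zero_iff] at hz)
  have hIntF : CircleIntegrable (fun z : ℂ =>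
      (-(m:ℂ)) ^ (n + 1) * m * (1 + z) ^ (n + 2) / (1 + (m:ℂ) * z)) 0 ε :=
    ContinuousOn.circleIntegrable hε.le (hcontF.mono sphere_subset_closedBall)
  have hF0 : (∮ z in C(0, ε),
      (-(m:ℂ)) ^ (n + 1) * m * (1 + z) ^ (n + 2) / (1 + (m:ℂ) * z)) = 0 := by
    refine circleIntegral_eq_zero_of_differentiable_on_off_countable hε.le
      Set.countable_empty hcontF ?_
    rintro z ⟨hz, -⟩
    refine DifferentiableAt.div ?_ ?_ ?_
    · exact (differentiableAt_const _).mul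
        (((differentiableAt_const _).add differentiableAt_id).pow _)
    · exact (differentiableAt_const _).add ((differentiableAt_const _).mul differentiableAt_id)
    · exact hden z (by rw [mem_ball_zero_iff] at hz; exact hz.le)
  have hzpow0 : ∀ d : ℤ, d ≠ -1 → (∮ z in C(0, (ε : ℝ)), z ^ d) = 0 := by
    intro d hd
    simpa using circleIntegral.integral_sub_zpow_of_ne hd 0 0 ε
  have hzpow1 : (∮ z in C(0, (ε : ℝ)), z ^ (-1 : ℤ)) = 2 * (Real.pi : ℂ) * I := by
    have h := circleIntegral.integral_sub_inv_of_mem_ball (c := (0:ℂ)) (w := 0) (R := ε)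
      (by simpa using hε)
    simpa [zpow_neg_one] using h
  rw [circleIntegral.integral_congr hε.le hid, circleIntegral_add' hIntDS hIntF, hF0, add_zero,
    circleIntegral_finset_sum' _ fun j _ => hIntInner j]
  have hone : ∀ j ∈ range (n + 1),
      (∮ z in C(0, ε), ∑ k ∈ range (n + 3),
        ((m : ℂ) * (-(m:ℂ)) ^ j * ((n + 2).choose k : ℂ)) *
          z ^ ((k : ℤ) + (j : ℤ) - ((n : ℤ) + 1)))
      = (2 * (Real.pi : ℂ) * I) * ((m : ℂ) * (-(m:ℂ)) ^ j * ((n + 2).choose (n - j) : ℂ)) := by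
    intro j hj
    rw [mem_range] at hj
    rw [circleIntegral_finset_sum' _ fun k _ => hIntMon _ _]
    have hval : ∀ k ∈ range (n + 3),
        (∮ z in C(0, ε), ((m : ℂ) * (-(m:ℂ)) ^ j * ((n + 2).choose k : ℂ)) *
          z ^ ((k : ℤ) + (j : ℤ) - ((n : ℤ) + 1)))
        = if k = n - j then
            ((m : ℂ) * (-(m:ℂ)) ^ j * ((n + 2).choose k : ℂ)) * (2 * (Real.pi : ℂ) * I)
          else 0 := by
      intro k hk
      rw [circleIntegral.integral_const_mul]
      by_cases hkd : (k : ℤ) + (j : ℤ) - ((n : ℤ) + 1) = -1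
      · rw [if_pos (by omega), hkd, hzpow1]
      · rw [if_neg (by omega), hzpow0 _ hkd, mul_zero]
    rw [Finset.sum_congr rfl hval, Finset.sum_ite_eq' (range (n + 3)) (n - j)]
    rw [if_pos (by rw [mem_range]; omega)]
    ring
  rw [Finset.sum_congr rfl hone, ← Finset.mul_sum, key_sum m n hm]

/-- Summation of the resulting power series. -/
private lemma series_eval (m : ℕ) (hm : 1 ≤ m) (t : ℂ) (ht : ‖t‖ < 1 / m) :
    HasSum
      (fun n : ℕ => (((1 - (m : ℂ)) ^ (n + 2) - 1 + m * (n + 2)) / m) * t ^ (n + 1))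
      ((m : ℂ) * t / ((1 - t) ^ 2 * (1 + ((m : ℂ) - 1) * t))) := by
  have hmR : (1 : ℝ) ≤ m := by exact_mod_cast hm
  have hm0 : (m : ℂ) ≠ 0 := Nat.cast_ne_zero.mpr (by omega)
  have ht1 : ‖t‖ < 1 := by
    refine lt_of_lt_of_le ht ?_
    rw [div_le_one (by linarith)]
    linarith
  have ht2 : ‖((1 : ℂ) - m) * t‖ < 1 := by
    rw [norm_mul]
    have h1 : ‖(1 : ℂ) - m‖ = (m : ℝ) - 1 := by
      have h : ((1 : ℂ) - m) = (((1 : ℝ) - m : ℝ) : ℂ) := by push_cast; ring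
      rw [h, Complex.norm_real, Real.norm_eq_abs, abs_of_nonpos (by linarith)]
      ring
    rw [h1]
    have h2 := mul_le_mul_of_nonneg_left ht.le (show (0:ℝ) ≤ (m:ℝ) - 1 by linarith)
    have h3 : ((m:ℝ) - 1) * (1 / m) = 1 - 1 / m := by field_simp
    have h4 : (0:ℝ) < 1 / m := by positivity
    linarith
  have hne1 : (1 : ℂ) - t ≠ 0 := by
    intro h
    rw [sub_eq_zero] at h
    rw [← h] at ht1
    simp at ht1
  have hne2 : (1 : ℂ) - ((1 : ℂ) - m) * t ≠ 0 := by
    intro h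
    rw [sub_eq_zero] at h
    rw [← h] at ht2
    simp at ht2
  have hne3 : (1 : ℂ) + ((m : ℂ) - 1) * t ≠ 0 := by
    intro h
    apply hne2
    linear_combination h
  have hA := (hasSum_geometric_of_norm_lt_one ht2).mul_left ((1 - (m:ℂ)) ^ 2 * t / m)
  have hB := (hasSum_geometric_of_norm_lt_one ht1).mul_left (2 * t - t / m)
  have hC := (hasSum_coe_mul_geometric_of_norm_lt_one ht1).mul_left t
  have h := (hA.add hB).add hC
  have hfun : (fun n : ℕ => (((1 - (m : ℂ)) ^ (n + 2) - 1 + m * (n + 2)) / m) * t ^ (n + 1))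
      = fun n : ℕ =>
        ((1 - (m:ℂ)) ^ 2 * t / m * (((1 : ℂ) - m) * t) ^ n + (2 * t - t / m) * t ^ n)
          + t * ((n : ℂ) * t ^ n) := by
    funext n
    rw [mul_pow]
    push_cast
    field_simp
    ring
  rw [hfun]
  convert h using 1
  · rfl
  rw [show (1 : ℂ) - (1 - (m : ℂ)) * t = 1 + ((m : ℂ) - 1) * t by ring]
  set d := 1 + ((m : ℂ) - 1) * t with hd
  field_simp
  rw [hd]
  ring

/-- The generating series of the Euler numbers `χ(Y^N_m)` of smooth degree-`m`
hypersurfaces in `ℂP^{N-1}` equals `mt/((1−t)²(1+(m−1)t))`. -/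
theorem euler_number_hypersurface_generating_series
    (m : ℕ) (hm : 1 ≤ m) (ε : ℝ) (hε : 0 < ε) (hεm : ε < 1 / m) :
    ∃ δ > (0 : ℝ), ∀ t : ℂ, ‖t‖ < δ →
      HasSum
        (fun n : ℕ =>
          ((2 * (Real.pi : ℂ) * I)⁻¹ *
              ∮ z in C(0, ε),
                (m : ℂ) * (1 + z) ^ (n + 2) / (z ^ (n + 1) * (1 + (m : ℂ) * z))) *
            t ^ (n + 1))
        ((m : ℂ) * t / ((1 - t) ^ 2 * (1 + ((m : ℂ) - 1) * t))) := by
  have hm0 : (0 : ℝ) < m := by exact_mod_cast hm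
  refine ⟨1 / m, by positivity, fun t ht => ?_⟩
  have h2pi : (2 * (Real.pi : ℂ) * I) ≠ 0 := by
    simp [Real.pi_ne_zero, I_ne_zero]
  have hfeq : (fun n : ℕ =>
        ((2 * (Real.pi : ℂ) * I)⁻¹ *
            ∮ z in C(0, ε),
              (m : ℂ) * (1 + z) ^ (n + 2) / (z ^ (n + 1) * (1 + (m : ℂ) * z))) *
          t ^ (n + 1))
      = fun n : ℕ => (((1 - (m : ℂ)) ^ (n + 2) - 1 + m * (n + 2)) / m) * t ^ (n + 1) := by
    funext n
    rw [integral_eval m n hm ε hε hεm, inv_mul_cancel_left₀ h2pi]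
  rw [hfeq]
  exact series_eval m hm t ht
end

section
/- Fix integers r ≥ 1 and m₁, …, m_r ≥ 1, and a real ε with 0 < ε < 1/max(m₁,…,m_r). For each integer N ≥ r+1 set χ_N = (1/(2πi)) ∮_{|z|=ε} (m₁⋯m_r)·(1+z)^N / (z^{N−r}·(1+m₁z)⋯(1+m_r z)) dz. Then there exists δ > 0 such that for every t ∈ ℂ with |t| < δ, the series ∑_{N=r+1}^∞ χ_N · t^{N−1} converges with sum equal to (1/(1−t)²) · ∏_{j=1}^{r} m_j t / (1+(m_j−1)t). -/
open Complex Metric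

/-- The generating series of the Euler numbers of smooth complete intersections
`Y^N_{m₁,…,m_r}` in `ℂP^{N-1}` equals `(1/(1−t)²)·∏_j m_j t/(1+(m_j−1)t)`. -/
theorem euler_number_complete_intersection_generating_series
    (r : ℕ) (hr : 1 ≤ r) (m : Fin r → ℕ) (hm : ∀ i, 1 ≤ m i)
    (ε : ℝ) (hε : 0 < ε) (hεm : ∀ i, ε < 1 / (m i)) :
    ∃ δ > (0 : ℝ), ∀ t : ℂ, ‖t‖ < δ →
      HasSum
        (fun n : ℕ =>
          ((2 * (Real.pi : ℂ) * I)⁻¹ *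
              ∮ z in C(0, ε),
                (∏ i, (m i : ℂ)) * (1 + z) ^ (n + r + 1) /
                  (z ^ (n + 1) * ∏ i, (1 + (m i : ℂ) * z))) *
            t ^ (n + r))
        (1 / (1 - t) ^ 2 *
          ∏ i, (m i : ℂ) * t / (1 + ((m i : ℂ) - 1) * t)) := by
  classical
  have hm1 : ∀ i, (1 : ℝ) ≤ (m i : ℝ) := fun i => by exact_mod_cast hm i
  have hmε : ∀ i, (m i : ℝ) * ε < 1 := by
    intro i
    have h := hεm i
    have hmpos : (0 : ℝ) < (m i : ℝ) := lt_of_lt_of_le one_pos (hm1 i)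
    rw [lt_div_iff₀ hmpos] at h
    linarith
  have hfac : ∀ z : ℂ, ‖z‖ ≤ ε → ∀ i, (1 + (m i : ℂ) * z) ≠ 0 := by
    intro z hz i H
    have h1 : ‖(m i : ℂ) * z‖ = 1 := by
      have h2 : (m i : ℂ) * z = -1 := by linear_combination H
      rw [h2, norm_neg, norm_one]
    have h2 : ‖(m i : ℂ) * z‖ < 1 := by
      rw [norm_mul]
      have hnc : ‖((m i : ℕ) : ℂ)‖ = (m i : ℝ) := by
        simp
      rw [hnc]
      calc (m i : ℝ) * ‖z‖ ≤ (m i : ℝ) * ε :=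
            mul_le_mul_of_nonneg_left hz (Nat.cast_nonneg _)
        _ < 1 := hmε i
    exact absurd h1 (ne_of_lt h2)
  have hPne : ∀ z : ℂ, ‖z‖ ≤ ε → (∏ i, (1 + (m i : ℂ) * z)) ≠ 0 := fun z hz =>
    Finset.prod_ne_zero_iff.mpr fun i _ => hfac z hz i
  refine ⟨ε / (2 * (1 + ε)), by positivity, fun t ht => ?_⟩
  set M : ℂ := ∏ i, (m i : ℂ) with hM
  -- basic smallness facts about t
  have htε' : ‖t‖ * (1 + ε) < ε / 2 := by
    have h1 : ‖t‖ * (1 + ε) < ε / (2 * (1 + ε)) * (1 + ε) :=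
      mul_lt_mul_of_pos_right ht (by positivity)
    have h2 : ε / (2 * (1 + ε)) * (1 + ε) = ε / 2 := by
      field_simp
    linarith
  have hthalf : ‖t‖ < 1 / 2 := by nlinarith [norm_nonneg t, hε]
  have h1t : (1 : ℂ) - t ≠ 0 := by
    intro H
    have ht1 : t = 1 := by linear_combination -H
    rw [ht1, norm_one] at hthalf
    norm_num at hthalf
  have h1tnorm : (1 : ℝ) / 2 < ‖(1 : ℂ) - t‖ := by
    have := norm_sub_norm_le (1 : ℂ) t
    rw [norm_one] at this
    linarith
  set w : ℂ := t / (1 - t) with hwdef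
  have hwnorm : ‖w‖ < ε := by
    rw [hwdef, norm_div]
    rw [div_lt_iff₀ (by linarith : (0 : ℝ) < ‖(1 : ℂ) - t‖)]
    have hd : ε / (2 * (1 + ε)) ≤ ε / 2 := by
      gcongr
      linarith
    nlinarith [hε]
  have hw0 : w ∈ ball (0 : ℂ) ε := mem_ball_zero_iff.mpr hwnorm
  -- geometric ratio bound on the circle
  have huz : ∀ z : ℂ, ‖z‖ = ε → ‖t * (1 + z) / z‖ < 1 / 2 := by
    intro z hz
    rw [norm_div, norm_mul, hz, div_lt_iff₀ hε]
    have h1z : ‖(1 : ℂ) + z‖ ≤ 1 + ε := by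
      calc ‖(1 : ℂ) + z‖ ≤ ‖(1 : ℂ)‖ + ‖z‖ := norm_add_le _ _
        _ = 1 + ε := by rw [norm_one, hz]
    nlinarith [norm_nonneg t]
  -- pointwise geometric summation on the circle
  have key : ∀ z : ℂ, ‖z‖ = ε →
      HasSum (fun n : ℕ => M * (1 + z) ^ (n + r + 1) /
          (z ^ (n + 1) * ∏ i, (1 + (m i : ℂ) * z)) * t ^ (n + r))
        ((z - w)⁻¹ * (M * (1 + z) ^ (r + 1) * t ^ r /
          ((1 - t) * ∏ i, (1 + (m i : ℂ) * z)))) := by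
    intro z hz
    have hz0 : z ≠ 0 := by
      intro H
      rw [H, norm_zero] at hz
      exact hε.ne hz
    have hPz : (∏ i, (1 + (m i : ℂ) * z)) ≠ 0 := hPne z hz.le
    have huz1 : ‖t * (1 + z) / z‖ < 1 := lt_trans (huz z hz) (by norm_num)
    have hu0 : (1 : ℂ) - t * (1 + z) / z ≠ 0 := by
      intro H
      have h2 : t * (1 + z) / z = 1 := by linear_combination -H
      rw [h2, norm_one] at huz1
      norm_num at huz1
    have hzw : z - w ≠ 0 := by
      intro H
      have h2 : z = w := by linear_combination H
      rw [h2] at hz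
      exact absurd hz (ne_of_lt hwnorm)
    have geom := (hasSum_geometric_of_norm_lt_one huz1).mul_left
      (M * (1 + z) ^ (r + 1) * t ^ r / (z * ∏ i, (1 + (m i : ℂ) * z)))
    have hfun : (fun n : ℕ => M * (1 + z) ^ (r + 1) * t ^ r /
        (z * ∏ i, (1 + (m i : ℂ) * z)) * (t * (1 + z) / z) ^ n)
        = fun n : ℕ => M * (1 + z) ^ (n + r + 1) /
          (z ^ (n + 1) * ∏ i, (1 + (m i : ℂ) * z)) * t ^ (n + r) := by
      funext n
      rw [div_pow, mul_pow]
      field_simp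
      ring
    rw [hfun] at geom
    convert geom using 1
    · rfl
    rw [← div_eq_mul_inv, inv_mul_eq_div, div_eq_div_iff hzw hu0, hwdef]
    field_simp
    ring
  -- facts about the circle parametrization
  have hcm : ∀ θ : ℝ, ‖circleMap 0 ε θ‖ = ε := fun θ => by
    rw [norm_circleMap_zero, abs_of_pos hε]
  have hcm0 : ∀ θ : ℝ, circleMap 0 ε θ ≠ 0 := fun θ => circleMap_ne_center hε.ne'
  have hcmcont : Continuous (circleMap 0 ε) := continuous_circleMap 0 ε
  have hPcont : Continuous fun θ : ℝ => ∏ i, (1 + (m i : ℂ) * circleMap 0 ε θ) :=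
    continuous_finset_prod _ fun i _ => continuous_const.add (continuous_const.mul hcmcont)
  have hAcont : Continuous fun θ : ℝ =>
      M * (1 + circleMap 0 ε θ) ^ (r + 1) * t ^ r /
        (circleMap 0 ε θ * ∏ i, (1 + (m i : ℂ) * circleMap 0 ε θ)) := by
    apply Continuous.div
      ((continuous_const.mul ((continuous_const.add hcmcont).pow (r + 1))).mul continuous_const)
      (hcmcont.mul hPcont)
    exact fun θ => mul_ne_zero (hcm0 θ) (hPne _ (hcm θ).le)
  have hdc : Continuous fun θ : ℝ => deriv (circleMap 0 ε) θ := by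
    simp only [deriv_circleMap]
    exact hcmcont.mul continuous_const
  have hderiv_norm : ∀ θ : ℝ, ‖deriv (circleMap 0 ε) θ‖ = ε := fun θ => by
    rw [deriv_circleMap, norm_mul, Complex.norm_I, mul_one]
    exact hcm θ
  -- interchange of sum and integral
  have main : HasSum
      (fun n : ℕ => ∮ z in C(0, ε),
        M * (1 + z) ^ (n + r + 1) / (z ^ (n + 1) * ∏ i, (1 + (m i : ℂ) * z)) * t ^ (n + r))
      (∮ z in C(0, ε), (z - w)⁻¹ •
        (M * (1 + z) ^ (r + 1) * t ^ r / ((1 - t) * ∏ i, (1 + (m i : ℂ) * z)))) := by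
    simp only [circleIntegral]
    refine intervalIntegral.hasSum_integral_of_dominated_convergence
      (bound := fun (n : ℕ) (θ : ℝ) =>
        ε * ‖M * (1 + circleMap 0 ε θ) ^ (r + 1) * t ^ r /
          (circleMap 0 ε θ * ∏ i, (1 + (m i : ℂ) * circleMap 0 ε θ))‖ * (1 / 2 : ℝ) ^ n)
      (fun n => ?_) (fun n => ?_) ?_ ?_ ?_
    · apply Continuous.aestronglyMeasurable
      apply hdc.smul
      apply Continuous.mul _ continuous_const
      apply Continuous.div
        (continuous_const.mul ((continuous_const.add hcmcont).pow (n + r + 1)))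
        ((hcmcont.pow _).mul hPcont)
      exact fun θ => mul_ne_zero (pow_ne_zero _ (hcm0 θ)) (hPne _ (hcm θ).le)
    · apply Filter.Eventually.of_forall
      intro θ _
      have hz0 : circleMap 0 ε θ ≠ 0 := hcm0 θ
      have hPz : (∏ i, (1 + (m i : ℂ) * circleMap 0 ε θ)) ≠ 0 := hPne _ (hcm θ).le
      have hid : M * (1 + circleMap 0 ε θ) ^ (n + r + 1) /
            ((circleMap 0 ε θ) ^ (n + 1) * ∏ i, (1 + (m i : ℂ) * circleMap 0 ε θ)) * t ^ (n + r)
          = M * (1 + circleMap 0 ε θ) ^ (r + 1) * t ^ r /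
            (circleMap 0 ε θ * ∏ i, (1 + (m i : ℂ) * circleMap 0 ε θ)) *
              (t * (1 + circleMap 0 ε θ) / circleMap 0 ε θ) ^ n := by
        rw [div_pow, mul_pow]
        field_simp
        ring
      rw [norm_smul, hderiv_norm, hid, norm_mul, norm_pow, ← mul_assoc]
      exact mul_le_mul_of_nonneg_left
        (pow_le_pow_left₀ (norm_nonneg _) (huz _ (hcm θ)).le n) (by positivity)
    · apply Filter.Eventually.of_forall
      intro θ _
      exact summable_geometric_two.mul_left _
    · have htsum : (fun θ : ℝ => ∑' n : ℕ,
          ε * ‖M * (1 + circleMap 0 ε θ) ^ (r + 1) * t ^ r /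
            (circleMap 0 ε θ * ∏ i, (1 + (m i : ℂ) * circleMap 0 ε θ))‖ * (1 / 2 : ℝ) ^ n)
          = fun θ : ℝ => ε * ‖M * (1 + circleMap 0 ε θ) ^ (r + 1) * t ^ r /
            (circleMap 0 ε θ * ∏ i, (1 + (m i : ℂ) * circleMap 0 ε θ))‖ * 2 := by
        funext θ
        rw [tsum_mul_left, tsum_geometric_two]
      rw [htsum]
      apply Continuous.intervalIntegrable
      exact (continuous_const.mul hAcont.norm).mul continuous_const
    · apply Filter.Eventually.of_forall
      intro θ _
      simp only [smul_eq_mul]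
      exact (key _ (hcm θ)).mul_left _
  -- Cauchy integral formula
  have cauchy : (∮ z in C(0, ε), (z - w)⁻¹ •
        (M * (1 + z) ^ (r + 1) * t ^ r / ((1 - t) * ∏ i, (1 + (m i : ℂ) * z))))
      = (2 * (Real.pi : ℂ) * I) •
        (M * (1 + w) ^ (r + 1) * t ^ r / ((1 - t) * ∏ i, (1 + (m i : ℂ) * w))) := by
    refine DiffContOnCl.circleIntegral_sub_inv_smul ?_ hw0
    apply DifferentiableOn.diffContOnCl
    rw [closure_ball (0 : ℂ) hε.ne']
    apply DifferentiableOn.div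
    · exact (((differentiable_const _).mul
        (((differentiable_const (1 : ℂ)).add differentiable_id).pow (r + 1))).mul
          (differentiable_const _)).differentiableOn
    · exact ((differentiable_const _).mul
        (Differentiable.fun_finsetProd fun i _ => by fun_prop)).differentiableOn
    · intro z hz
      exact mul_ne_zero h1t (hPne z (mem_closedBall_zero_iff.mp hz))
  rw [cauchy] at main
  have h2pii : (2 * (Real.pi : ℂ) * I) ≠ 0 := by
    simp [Real.pi_ne_zero, I_ne_zero]
  have final := main.mul_left ((2 * (Real.pi : ℂ) * I)⁻¹)
  convert final using 1
  · rfl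
  · funext n
    have e1 := circleIntegral.integral_smul_const
      (fun z => M * (1 + z) ^ (n + r + 1) / (z ^ (n + 1) * ∏ i, (1 + (m i : ℂ) * z)))
      (t ^ (n + r)) 0 ε
    simp only [smul_eq_mul] at e1
    rw [mul_assoc, e1]
  · rw [smul_eq_mul, inv_mul_cancel_left₀ h2pii]
    -- final algebra
    have hQi : ∀ i, (1 + ((m i : ℂ) - 1) * t) ≠ 0 := by
      intro i
      have h2 : (1 + ((m i : ℂ) - 1) * t) = (1 + (m i : ℂ) * w) * (1 - t) := by
        rw [hwdef]
        field_simp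
        ring
      rw [h2]
      exact mul_ne_zero (hfac w hwnorm.le i) h1t
    have hQ : (∏ i, (1 + ((m i : ℂ) - 1) * t)) ≠ 0 :=
      Finset.prod_ne_zero_iff.mpr fun i _ => hQi i
    have hPw : (∏ i, (1 + (m i : ℂ) * w))
        = (∏ i, (1 + ((m i : ℂ) - 1) * t)) * ((1 - t)⁻¹) ^ r := by
      calc (∏ i, (1 + (m i : ℂ) * w))
          = ∏ i, ((1 + ((m i : ℂ) - 1) * t) * (1 - t)⁻¹) := by
            refine Finset.prod_congr rfl fun i _ => ?_
            rw [hwdef]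
            field_simp
            ring
        _ = _ := by
            rw [Finset.prod_mul_distrib, Finset.prod_const, Finset.card_univ, Fintype.card_fin]
    have h1w : (1 : ℂ) + w = (1 - t)⁻¹ := by
      rw [hwdef]
      field_simp
      ring
    have hprodt : (∏ i, ((m i : ℂ) * t / (1 + ((m i : ℂ) - 1) * t)))
        = M * t ^ r / ∏ i, (1 + ((m i : ℂ) - 1) * t) := by
      rw [Finset.prod_div_distrib, Finset.prod_mul_distrib, Finset.prod_const,
        Finset.card_univ, Fintype.card_fin, hM]
    rw [hprodt, h1w, hPw]
    have halg : ∀ a Q N T : ℂ, a ≠ 0 → Q ≠ 0 →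
        1 / a ^ 2 * (N * T / Q) = N * (a⁻¹) ^ (r + 1) * T / (a * (Q * (a⁻¹) ^ r)) := by
      intro a Q N T ha hQ'
      rw [inv_pow, inv_pow]
      field_simp
      ring
    exact halg (1 - t) _ M (t ^ r) h1t hQ
end

section
/- For every τ ∈ ℂ with Im τ > 0, the derivative of the theta function at the origin satisfies θ′(0, τ) = 2π · η(τ)³. -/
open Complex

/-- The Jacobi theta function
`θ(v,τ) = i·e^{πiτ/4}·e^{−πiv}·∏_{k≥1}(1−q^k)(1−q^{k−1}e^{2πiv})(1−q^k e^{−2πiv})`,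
where `q = e^{2πiτ}`. -/
noncomputable def theta (v τ : ℂ) : ℂ :=
  I * exp ((Real.pi : ℂ) * I * τ / 4) * exp (-((Real.pi : ℂ) * I * v)) *
    ∏' k : ℕ,
      (1 - exp (2 * (Real.pi : ℂ) * I * τ) ^ (k + 1)) *
      (1 - exp (2 * (Real.pi : ℂ) * I * τ) ^ k * exp (2 * (Real.pi : ℂ) * I * v)) *
      (1 - exp (2 * (Real.pi : ℂ) * I * τ) ^ (k + 1) * exp (-(2 * (Real.pi : ℂ) * I * v)))

/-- The Dedekind eta function `η(τ) = e^{πiτ/12}·∏_{k≥1}(1−q^k)`, `q = e^{2πiτ}`. -/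
noncomputable def dedekindEta (τ : ℂ) : ℂ :=
  exp ((Real.pi : ℂ) * I * τ / 12) *
    ∏' k : ℕ, (1 - exp (2 * (Real.pi : ℂ) * I * τ) ^ (k + 1))

open Filter Topology

/-- `∑ log(1 - q^(k+1) x)`, the log of the infinite product `∏ (1 - q^(k+1) x)`. -/
private noncomputable def logSum (q x : ℂ) : ℂ := ∑' k : ℕ, Complex.log (1 - q ^ (k + 1) * x)

private lemma one_sub_ne_zero_of_norm_lt {z : ℂ} (h : ‖z‖ < 1) : (1 : ℂ) - z ≠ 0 := by
  intro hc
  rw [sub_eq_zero] at hc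
  rw [← hc] at h
  simp at h

private lemma hasProd_of_summable_log {f : ℕ → ℂ} (h0 : ∀ n, f n ≠ 0)
    (hs : Summable fun n => Complex.log (f n)) :
    HasProd f (Complex.exp (∑' n, Complex.log (f n))) :=
  hs.hasSum.cexp.congr_fun fun n => (Complex.exp_log (h0 n)).symm

private lemma tprod_eq_zero_of_eq_zero {f : ℕ → ℂ} (h : f 0 = 0) : ∏' n, f n = 0 := by
  have hP : HasProd f 0 := by
    have hev : (fun s : Finset ℕ => ∏ i ∈ s, f i) =ᶠ[atTop] fun _ => 0 := by
      filter_upwards [Filter.eventually_ge_atTop ({0} : Finset ℕ)] with s hs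
      exact Finset.prod_eq_zero (Finset.singleton_subset_iff.mp hs) h
    exact Filter.Tendsto.congr' hev.symm tendsto_const_nhds
  exact hP.tprod_eq

private lemma norm_term_le {q x : ℂ} {r : ℝ} (hq : ‖q‖ ≤ 1) (hx : ‖q‖ * ‖x‖ ≤ r) (k : ℕ) :
    ‖q ^ (k + 1) * x‖ ≤ r := by
  have hr0 : (0 : ℝ) ≤ r := le_trans (by positivity) hx
  calc ‖q ^ (k + 1) * x‖ = ‖q‖ ^ k * (‖q‖ * ‖x‖) := by
        rw [norm_mul, norm_pow, pow_succ, mul_assoc]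
    _ ≤ 1 * r :=
        mul_le_mul (pow_le_one₀ (norm_nonneg q) hq) hx (by positivity) zero_le_one
    _ = r := one_mul r

private lemma norm_log_one_sub_le {z : ℂ} {r : ℝ} (hr : r < 1) (hz : ‖z‖ ≤ r) :
    ‖Complex.log (1 - z)‖ ≤ (r / (2 * (1 - r)) + 1) * ‖z‖ := by
  have hzn : (0 : ℝ) ≤ ‖z‖ := norm_nonneg z
  have hr0 : (0 : ℝ) ≤ r := le_trans hzn hz
  have hz1 : ‖(-z)‖ < 1 := by rw [norm_neg]; linarith
  have h := Complex.norm_log_one_add_le hz1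
  rw [show (1 : ℂ) + -z = 1 - z by ring, norm_neg] at h
  have h2 : (0 : ℝ) < 1 - r := by linarith
  have h2' : (0 : ℝ) < 1 - ‖z‖ := by linarith
  have h3 : (1 - ‖z‖)⁻¹ ≤ (1 - r)⁻¹ := by
    apply inv_anti₀ h2; linarith
  have key : ‖z‖ ^ 2 * (1 - ‖z‖)⁻¹ ≤ (r * ‖z‖) * (1 - r)⁻¹ := by
    apply mul_le_mul (by nlinarith) h3 (by positivity) (by positivity)
  have e1 : (r / (2 * (1 - r)) + 1) * ‖z‖ = (r * ‖z‖) * (1 - r)⁻¹ / 2 + ‖z‖ := by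
    field_simp
  rw [e1]
  linarith

private lemma norm_log_one_sub_term_le {q x : ℂ} {r : ℝ} (hq : ‖q‖ < 1) (hr : r < 1)
    (hx : ‖q‖ * ‖x‖ ≤ r) (k : ℕ) :
    ‖Complex.log (1 - q ^ (k + 1) * x)‖ ≤ (r / (2 * (1 - r)) + 1) * (r * ‖q‖ ^ k) := by
  have hr0 : (0 : ℝ) ≤ r := le_trans (by positivity) hx
  have hzr : ‖q ^ (k + 1) * x‖ ≤ r := norm_term_le hq.le hx k
  have hK : (0 : ℝ) ≤ r / (2 * (1 - r)) + 1 :=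
    add_nonneg (div_nonneg hr0 (by linarith)) zero_le_one
  have hz2 : ‖q ^ (k + 1) * x‖ ≤ r * ‖q‖ ^ k := by
    calc ‖q ^ (k + 1) * x‖ = ‖q‖ ^ k * (‖q‖ * ‖x‖) := by
          rw [norm_mul, norm_pow, pow_succ, mul_assoc]
      _ ≤ ‖q‖ ^ k * r := by
          apply mul_le_mul_of_nonneg_left hx (by positivity)
      _ = r * ‖q‖ ^ k := by ring
  calc ‖Complex.log (1 - q ^ (k + 1) * x)‖
      ≤ (r / (2 * (1 - r)) + 1) * ‖q ^ (k + 1) * x‖ := norm_log_one_sub_le hr hzr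
    _ ≤ (r / (2 * (1 - r)) + 1) * (r * ‖q‖ ^ k) := mul_le_mul_of_nonneg_left hz2 hK

private lemma summable_log_term {q x : ℂ} {r : ℝ} (hq : ‖q‖ < 1) (hr : r < 1)
    (hx : ‖q‖ * ‖x‖ ≤ r) :
    Summable fun k : ℕ => Complex.log (1 - q ^ (k + 1) * x) := by
  apply Summable.of_norm_bounded (g := fun k => (r / (2 * (1 - r)) + 1) * (r * ‖q‖ ^ k))
  · exact (((summable_geometric_of_lt_one (norm_nonneg q) hq).mul_left r).mul_left _)
  · exact norm_log_one_sub_term_le hq hr hx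

private lemma term_ne_zero {q x : ℂ} {r : ℝ} (hq : ‖q‖ < 1) (hr : r < 1)
    (hx : ‖q‖ * ‖x‖ ≤ r) (k : ℕ) : (1 : ℂ) - q ^ (k + 1) * x ≠ 0 :=
  one_sub_ne_zero_of_norm_lt (lt_of_le_of_lt (norm_term_le hq.le hx k) hr)

private lemma hasProd_term {q x : ℂ} {r : ℝ} (hq : ‖q‖ < 1) (hr : r < 1)
    (hx : ‖q‖ * ‖x‖ ≤ r) :
    HasProd (fun k : ℕ => 1 - q ^ (k + 1) * x) (Complex.exp (logSum q x)) :=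
  hasProd_of_summable_log (term_ne_zero hq hr hx) (summable_log_term hq hr hx)

private lemma continuousAt_logSum {q : ℂ} (hq0 : q ≠ 0) (hq : ‖q‖ < 1) :
    ContinuousAt (fun x => logSum q x) 1 := by
  have hq0' : 0 < ‖q‖ := norm_pos_iff.mpr hq0
  set r : ℝ := (1 + ‖q‖) / 2 with hrdef
  have hr1 : r < 1 := by rw [hrdef]; linarith
  have hqr : ‖q‖ < r := by rw [hrdef]; linarith
  have hr0 : 0 < r := lt_trans hq0' hqr
  set ε : ℝ := r / ‖q‖ - 1 with hεdef
  have hε : 0 < ε := by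
    have := (one_lt_div hq0').mpr hqr
    rw [hεdef]; linarith
  have hxr : ∀ x : ℂ, x ∈ Metric.closedBall (1 : ℂ) ε → ‖q‖ * ‖x‖ ≤ r := by
    intro x hx
    rw [Metric.mem_closedBall, dist_eq_norm] at hx
    have h1 : ‖x‖ ≤ 1 + ε := by
      calc ‖x‖ = ‖x - 1 + 1‖ := by rw [sub_add_cancel]
        _ ≤ ‖x - 1‖ + ‖(1 : ℂ)‖ := norm_add_le _ _
        _ ≤ ε + 1 := by rw [norm_one]; linarith
        _ = 1 + ε := by ring
    have h2 : (1 : ℝ) + ε = r / ‖q‖ := by rw [hεdef]; ring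
    calc ‖q‖ * ‖x‖ ≤ ‖q‖ * (r / ‖q‖) := by
          apply mul_le_mul_of_nonneg_left (h1.trans_eq h2) hq0'.le
      _ = r := by rw [mul_comm]; exact div_mul_cancel₀ r hq0'.ne'
  have hU : TendstoUniformlyOn
      (fun (t : Finset ℕ) x => ∑ k ∈ t, Complex.log (1 - q ^ (k + 1) * x))
      (fun x => logSum q x) atTop (Metric.closedBall (1 : ℂ) ε) := by
    exact tendstoUniformlyOn_tsum
      (((summable_geometric_of_lt_one (norm_nonneg q) hq).mul_left r).mul_left _)
      (fun k x hx => norm_log_one_sub_term_le hq hr1 (hxr x hx) k)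
  have hcontOn : ContinuousOn (fun x => logSum q x) (Metric.closedBall (1 : ℂ) ε) := by
    apply hU.continuousOn
    refine Filter.Eventually.frequently ?_
    filter_upwards with t
    apply continuousOn_finset_sum
    intro k _
    intro x hx
    apply ContinuousAt.continuousWithinAt
    have hzr : ‖q ^ (k + 1) * x‖ ≤ r := norm_term_le hq.le (hxr x hx) k
    have hslit : (1 : ℂ) - q ^ (k + 1) * x ∈ Complex.slitPlane := by
      rw [show (1 : ℂ) - q ^ (k + 1) * x = 1 + -(q ^ (k + 1) * x) by ring]
      exact Complex.mem_slitPlane_of_norm_lt_one (by rw [norm_neg]; linarith)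
    have hcm : ContinuousAt (fun y : ℂ => 1 - q ^ (k + 1) * y) x :=
      (continuous_const.sub (continuous_const.mul continuous_id)).continuousAt
    exact ContinuousAt.comp (g := Complex.log) (f := fun y : ℂ => 1 - q ^ (k + 1) * y)
      (continuousAt_clog hslit) hcm
  exact hcontOn.continuousAt (Metric.closedBall_mem_nhds 1 hε)

/-- The classical identity `θ'(0, τ) = 2π·η(τ)³`. -/
theorem theta_deriv_zero_eq_eta_cubed
    (τ : ℂ) (hτ : 0 < τ.im) :
    deriv (fun w => theta w τ) 0 = 2 * (Real.pi : ℂ) * (dedekindEta τ) ^ 3 := by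
  set q : ℂ := exp (2 * (Real.pi : ℂ) * I * τ) with hqdef
  have hq0' : 0 < ‖q‖ := norm_pos_iff.mpr (Complex.exp_ne_zero _)
  have hq : ‖q‖ < 1 := by
    rw [hqdef, Complex.norm_exp, Real.exp_lt_one_iff]
    have : (2 * (Real.pi : ℂ) * I * τ).re = -(2 * Real.pi * τ.im) := by
      simp [Complex.mul_re, Complex.mul_im]
      try ring
    rw [this]
    nlinarith [Real.pi_pos]
  set r : ℝ := (1 + ‖q‖) / 2 with hrdef
  have hr1 : r < 1 := by rw [hrdef]; linarith
  have hqr : ‖q‖ < r := by rw [hrdef]; linarith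
  have hr0 : 0 < r := lt_trans hq0' hqr
  set ε : ℝ := r / ‖q‖ - 1 with hεdef
  have hε : 0 < ε := by
    have := (one_lt_div hq0').mpr hqr
    rw [hεdef]; linarith
  have hxr : ∀ x : ℂ, x ∈ Metric.closedBall (1 : ℂ) ε → ‖q‖ * ‖x‖ ≤ r := by
    intro x hx
    rw [Metric.mem_closedBall, dist_eq_norm] at hx
    have h1 : ‖x‖ ≤ 1 + ε := by
      calc ‖x‖ = ‖x - 1 + 1‖ := by rw [sub_add_cancel]
        _ ≤ ‖x - 1‖ + ‖(1 : ℂ)‖ := norm_add_le _ _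
        _ ≤ ε + 1 := by rw [norm_one]; linarith
        _ = 1 + ε := by ring
    have h2 : (1 : ℝ) + ε = r / ‖q‖ := by rw [hεdef]; ring
    calc ‖q‖ * ‖x‖ ≤ ‖q‖ * (r / ‖q‖) := by
          apply mul_le_mul_of_nonneg_left (h1.trans_eq h2) hq0'.le
      _ = r := by rw [mul_comm]; exact div_mul_cancel₀ r hq0'.ne'
  -- the constant factor product
  have hx1 : ‖q‖ * ‖(1 : ℂ)‖ ≤ r := by simpa using hqr.le
  have hA : HasProd (fun k : ℕ => 1 - q ^ (k + 1)) (Complex.exp (logSum q 1)) :=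
    (hasProd_term hq hr1 hx1).congr_fun fun k => by rw [mul_one]
  -- θ(0,τ) = 0
  have hθ0 : theta 0 τ = 0 := by
    simp only [theta]
    rw [tprod_eq_zero_of_eq_zero (by simp), mul_zero]
  -- eventual facts near 0
  have hcE : ContinuousAt (fun v : ℂ => exp (2 * (Real.pi : ℂ) * I * v)) 0 := by fun_prop
  have hcX : ContinuousAt (fun v : ℂ => exp (-(2 * (Real.pi : ℂ) * I * v))) 0 := by fun_prop
  have hEball : ∀ᶠ v in 𝓝 (0 : ℂ),
      exp (2 * (Real.pi : ℂ) * I * v) ∈ Metric.closedBall (1 : ℂ) ε := by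
    apply hcE.eventually_mem
    simpa using Metric.closedBall_mem_nhds (1 : ℂ) hε
  have hXball : ∀ᶠ v in 𝓝 (0 : ℂ),
      exp (-(2 * (Real.pi : ℂ) * I * v)) ∈ Metric.closedBall (1 : ℂ) ε := by
    apply hcX.eventually_mem
    simpa using Metric.closedBall_mem_nhds (1 : ℂ) hε
  have hnv : ∀ᶠ v in 𝓝 (0 : ℂ), ‖v‖ < 1 := by
    filter_upwards [Metric.ball_mem_nhds (0 : ℂ) one_pos] with v hv
    simpa [dist_zero_right] using hv
  have hvne : ∀ᶠ v in 𝓝[≠] (0 : ℂ), v ≠ 0 := self_mem_nhdsWithin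
  -- the key factorization
  have hfac : ∀ᶠ v in 𝓝[≠] (0 : ℂ), theta v τ =
      I * exp ((Real.pi : ℂ) * I * τ / 4) * exp (-((Real.pi : ℂ) * I * v)) *
        ((Complex.exp (logSum q 1) *
          ((1 - exp (2 * (Real.pi : ℂ) * I * v)) *
            Complex.exp (logSum q (exp (2 * (Real.pi : ℂ) * I * v))))) *
          Complex.exp (logSum q (exp (-(2 * (Real.pi : ℂ) * I * v))))) := by
    filter_upwards [hEball.filter_mono nhdsWithin_le_nhds,
      hXball.filter_mono nhdsWithin_le_nhds, hnv.filter_mono nhdsWithin_le_nhds, hvne]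
        with v hE hX hn hv0
    have hxE : ‖q‖ * ‖exp (2 * (Real.pi : ℂ) * I * v)‖ ≤ r := hxr _ hE
    have hxX : ‖q‖ * ‖exp (-(2 * (Real.pi : ℂ) * I * v))‖ ≤ r := hxr _ hX
    have h1mE : (1 : ℂ) - exp (2 * (Real.pi : ℂ) * I * v) ≠ 0 := by
      rw [sub_ne_zero]
      intro h1
      have hEv1 : exp (2 * (Real.pi : ℂ) * I * v) = 1 := h1.symm
      rw [Complex.exp_eq_one_iff] at hEv1
      obtain ⟨n, hn'⟩ := hEv1
      have h2πI : (2 * (Real.pi : ℂ) * I) ≠ 0 :=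
        mul_ne_zero (mul_ne_zero two_ne_zero (Complex.ofReal_ne_zero.mpr Real.pi_ne_zero))
          Complex.I_ne_zero
      have hveq : v = (n : ℂ) := by
        apply mul_left_cancel₀ h2πI
        rw [hn']; ring
      rw [hveq] at hn
      rw [Complex.norm_intCast] at hn
      have hn1 : |n| < 1 := by exact_mod_cast hn
      have h' := abs_lt.mp hn1
      have : n = 0 := by omega
      rw [this] at hveq
      exact hv0 (by simpa using hveq)
    -- the three products
    have hC : HasProd (fun k : ℕ => 1 - q ^ (k + 1) * exp (-(2 * (Real.pi : ℂ) * I * v)))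
        (Complex.exp (logSum q (exp (-(2 * (Real.pi : ℂ) * I * v))))) :=
      hasProd_term hq hr1 hxX
    have hB : HasProd (fun k : ℕ => 1 - q ^ k * exp (2 * (Real.pi : ℂ) * I * v))
        ((1 - exp (2 * (Real.pi : ℂ) * I * v)) *
          Complex.exp (logSum q (exp (2 * (Real.pi : ℂ) * I * v)))) := by
      have hs1 : Summable fun k : ℕ =>
          Complex.log (1 - q ^ (k + 1) * exp (2 * (Real.pi : ℂ) * I * v)) :=
        summable_log_term hq hr1 hxE
      have hs0 : Summable fun k : ℕ =>
          Complex.log (1 - q ^ k * exp (2 * (Real.pi : ℂ) * I * v)) :=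
        (summable_nat_add_iff 1).mp hs1
      have hne0 : ∀ k : ℕ, (1 : ℂ) - q ^ k * exp (2 * (Real.pi : ℂ) * I * v) ≠ 0 := by
        intro k
        cases k with
        | zero => simpa using h1mE
        | succ n => exact term_ne_zero hq hr1 hxE n
      have h1 := hasProd_of_summable_log hne0 hs0
      rw [hs0.tsum_eq_zero_add, pow_zero, one_mul, Complex.exp_add, Complex.exp_log h1mE] at h1
      exact h1
    simp only [theta]
    rw [← hqdef]
    congr 1
    exact ((hA.mul hB).mul hC).tprod_eq
  -- continuity pieces
  have hlog : ContinuousAt (fun x => logSum q x) 1 :=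
    continuousAt_logSum (Complex.exp_ne_zero _) hq
  have h2 : Tendsto (fun x : ℂ => Complex.exp (logSum q x)) (𝓝 1)
      (𝓝 (Complex.exp (logSum q 1))) :=
    (Complex.continuous_exp.continuousAt (x := logSum q 1)).comp (x := (1 : ℂ)) hlog
  have t3 : Tendsto (fun v : ℂ => Complex.exp (logSum q (exp (2 * (Real.pi : ℂ) * I * v))))
      (𝓝 0) (𝓝 (Complex.exp (logSum q 1))) := by
    have h1 : Tendsto (fun v : ℂ => exp (2 * (Real.pi : ℂ) * I * v)) (𝓝 0) (𝓝 1) := by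
      simpa using hcE.tendsto
    exact h2.comp h1
  have t4 : Tendsto (fun v : ℂ => Complex.exp (logSum q (exp (-(2 * (Real.pi : ℂ) * I * v)))))
      (𝓝 0) (𝓝 (Complex.exp (logSum q 1))) := by
    have h1 : Tendsto (fun v : ℂ => exp (-(2 * (Real.pi : ℂ) * I * v))) (𝓝 0) (𝓝 1) := by
      simpa using hcX.tendsto
    exact h2.comp h1
  -- the slope of 1 - e^{2πiv} at 0
  have hgderiv : HasDerivAt (fun v : ℂ => 1 - exp (2 * (Real.pi : ℂ) * I * v))
      (-(2 * (Real.pi : ℂ) * I)) 0 := by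
    have h1 : HasDerivAt (fun v : ℂ => 2 * (Real.pi : ℂ) * I * v) (2 * (Real.pi : ℂ) * I) 0 := by
      simpa using (hasDerivAt_id (0 : ℂ)).const_mul (2 * (Real.pi : ℂ) * I)
    have h2 := h1.cexp
    have h3 := h2.const_sub 1
    simpa using h3
  have t2 : Tendsto (fun v : ℂ => (1 - exp (2 * (Real.pi : ℂ) * I * v)) / v)
      (𝓝[≠] 0) (𝓝 (-(2 * (Real.pi : ℂ) * I))) := by
    have hD := hasDerivAt_iff_tendsto_slope.mp hgderiv
    apply hD.congr
    intro v
    rw [slope_def_field]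
    simp
  have t1 : Tendsto (fun v : ℂ => I * exp ((Real.pi : ℂ) * I * τ / 4) *
      exp (-((Real.pi : ℂ) * I * v))) (𝓝 0)
      (𝓝 (I * exp ((Real.pi : ℂ) * I * τ / 4) * 1)) := by
    have hc : ContinuousAt (fun v : ℂ => I * exp ((Real.pi : ℂ) * I * τ / 4) *
        exp (-((Real.pi : ℂ) * I * v))) 0 := by fun_prop
    simpa using hc.tendsto
  -- the full limit
  set L : ℂ := (I * exp ((Real.pi : ℂ) * I * τ / 4) * 1) *
      ((Complex.exp (logSum q 1) * ((-(2 * (Real.pi : ℂ) * I)) * Complex.exp (logSum q 1))) *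
        Complex.exp (logSum q 1)) with hLdef
  have tΨ : Tendsto (fun v : ℂ =>
      (I * exp ((Real.pi : ℂ) * I * τ / 4) * exp (-((Real.pi : ℂ) * I * v))) *
        ((Complex.exp (logSum q 1) *
          (((1 - exp (2 * (Real.pi : ℂ) * I * v)) / v) *
            Complex.exp (logSum q (exp (2 * (Real.pi : ℂ) * I * v))))) *
          Complex.exp (logSum q (exp (-(2 * (Real.pi : ℂ) * I * v)))))) (𝓝[≠] 0) (𝓝 L) := by
    rw [hLdef]
    exact (t1.mono_left nhdsWithin_le_nhds).mul
      (((tendsto_const_nhds.mul (t2.mul (t3.mono_left nhdsWithin_le_nhds))).mul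
        (t4.mono_left nhdsWithin_le_nhds)))
  have hslope : Tendsto (slope (fun w => theta w τ) 0) (𝓝[≠] 0) (𝓝 L) := by
    apply Filter.Tendsto.congr' _ tΨ
    filter_upwards [hfac, hvne] with v hfv hv0
    simp only [slope_def_field, hθ0, sub_zero]
    rw [hfv]
    field_simp [hv0]
    try ring
  have hD : HasDerivAt (fun w => theta w τ) L 0 := hasDerivAt_iff_tendsto_slope.mpr hslope
  rw [hD.deriv]
  -- finish: identify L with 2π η³
  have hη : dedekindEta τ = exp ((Real.pi : ℂ) * I * τ / 12) * Complex.exp (logSum q 1) := by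
    rw [dedekindEta, ← hqdef, hA.tprod_eq]
  rw [hη, hLdef]
  have h3 : (exp ((Real.pi : ℂ) * I * τ / 12)) ^ 3 = exp ((Real.pi : ℂ) * I * τ / 4) := by
    rw [← Complex.exp_nat_mul]
    congr 1
    push_cast
    ring
  rw [mul_pow, h3]
  linear_combination (-(2 * (Real.pi : ℂ)) * exp ((Real.pi : ℂ) * I * τ / 4) *
    (Complex.exp (logSum q 1)) ^ 3) * Complex.I_sq
end

section
/- Fix τ ∈ ℂ with Im τ > 0, v ∈ ℂ, integers m ≥ 1 and N ≥ 1, and integers a, b with 0 ≤ a, b ≤ m−1. Set z₀ = (−v + a + bτ)/m and assume θ(z₀, τ) ≠ 0 and θ(v + z₀, τ) ≠ 0. Then for all sufficiently small ε > 0, ∮_{|z−z₀|=ε} θ(mz,τ)/θ(v+mz,τ) · (θ(v+z,τ)/θ(z,τ))^N dz = (e^{2πibv}/m) · G(e^{2πiv}, e^{2πiτ}) · (θ(v+z₀,τ)/θ(z₀,τ))^N. -/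
open Complex

/-- `G(y, q) = y^{-1/2}·∏_{k≥1}(1−yq^{k−1})(1−y⁻¹q^k)/(1−q^k)²`, written as a
function of `v` and `τ` with `y = e^{2πiv}`, `q = e^{2πiτ}`,
`y^{-1/2} = e^{−πiv}`. -/
noncomputable def Gfun (v τ : ℂ) : ℂ :=
  exp (-((Real.pi : ℂ) * I * v)) *
    ∏' k : ℕ,
      (1 - exp (2 * (Real.pi : ℂ) * I * v) * exp (2 * (Real.pi : ℂ) * I * τ) ^ k) *
        (1 - (exp (2 * (Real.pi : ℂ) * I * v))⁻¹ * exp (2 * (Real.pi : ℂ) * I * τ) ^ (k + 1)) /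
        (1 - exp (2 * (Real.pi : ℂ) * I * τ) ^ (k + 1)) ^ 2

open Real Filter

noncomputable def Afun (q x : ℂ) : ℂ := ∏' k : ℕ, (1 - q ^ (k + 1) * x)

lemma exists_K {q : ℂ} (hq : ‖q‖ < 1) (R : ℝ) :
    ∃ K : ℕ, ∀ k : ℕ, ‖q‖ ^ (k + K + 1) * R ≤ 1 / 2 := by
  have h : Filter.Tendsto (fun n : ℕ => ‖q‖ ^ n * R) atTop (nhds 0) := by
    simpa using (tendsto_pow_atTop_nhds_zero_of_lt_one (norm_nonneg q) hq).mul_const R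
  have h2 : ∀ᶠ n in atTop, ‖q‖ ^ n * R < 1 / 2 :=
    h.eventually_lt_const (by norm_num)
  obtain ⟨K, hK⟩ := h2.exists_forall_of_atTop
  exact ⟨K, fun k => (hK (k + K + 1) (by omega)).le⟩

lemma log_summable {q x : ℂ} (hq : ‖q‖ < 1) {K : ℕ}
    (hK : ∀ k : ℕ, ‖q ^ (k + K + 1) * x‖ ≤ 1 / 2) :
    Summable fun k : ℕ => Complex.log (1 - q ^ (k + K + 1) * x) := by
  have hgeom : Summable fun k : ℕ => ‖q‖ ^ k := summable_geometric_of_lt_one (norm_nonneg q) hq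
  apply Summable.of_norm_bounded (g := fun k : ℕ => (3 / 4) * ‖q‖ ^ k) (hgeom.mul_left _)
  intro k
  have h1 : ‖q ^ (k + K + 1) * x‖ ≤ (1 / 2) * ‖q‖ ^ k := by
    have h0 := hK 0
    rw [norm_mul, norm_pow] at h0 ⊢
    calc ‖q‖ ^ (k + K + 1) * ‖x‖ = ‖q‖ ^ k * (‖q‖ ^ (0 + K + 1) * ‖x‖) := by ring_nf
      _ ≤ ‖q‖ ^ k * (1 / 2) := by
          apply mul_le_mul_of_nonneg_left h0 (pow_nonneg (norm_nonneg q) k)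
      _ = (1 / 2) * ‖q‖ ^ k := by ring
  have h2 : ‖Complex.log (1 - q ^ (k + K + 1) * x)‖ ≤ (3 / 2) * ‖q ^ (k + K + 1) * x‖ := by
    have := Complex.norm_log_one_add_half_le_self (z := -(q ^ (k + K + 1) * x))
      (by simpa using hK k)
    simpa [sub_eq_add_neg] using this
  calc ‖Complex.log (1 - q ^ (k + K + 1) * x)‖ ≤ (3 / 2) * ((1 / 2) * ‖q‖ ^ k) :=
        h2.trans (by nlinarith [h1])
    _ = (3 / 4) * ‖q‖ ^ k := by ring

lemma factor_ne_zero {w : ℂ} (h : ‖w‖ < 1) : 1 - w ≠ 0 := by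
  intro hc
  have : w = 1 := by linear_combination -hc
  rw [this] at h; simp at h

lemma tail_hasProd {q x : ℂ} (hq : ‖q‖ < 1) {K : ℕ}
    (hK : ∀ k : ℕ, ‖q ^ (k + K + 1) * x‖ ≤ 1 / 2) :
    HasProd (fun k : ℕ => 1 - q ^ (k + K + 1) * x)
      (Complex.exp (∑' k : ℕ, Complex.log (1 - q ^ (k + K + 1) * x))) := by
  have hne : ∀ k : ℕ, 1 - q ^ (k + K + 1) * x ≠ 0 := fun k =>
    factor_ne_zero ((hK k).trans_lt (by norm_num))
  have h := (log_summable hq hK).hasSum.cexp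
  have h2 : (Complex.exp ∘ fun k : ℕ => Complex.log (1 - q ^ (k + K + 1) * x)) =
      fun k : ℕ => 1 - q ^ (k + K + 1) * x := by
    funext k
    exact Complex.exp_log (hne k)
  rwa [h2] at h

lemma multipliable_A {q : ℂ} (hq : ‖q‖ < 1) (x : ℂ) :
    Multipliable fun k : ℕ => 1 - q ^ (k + 1) * x := by
  obtain ⟨K, hK⟩ := exists_K hq ‖x‖
  have hK' : ∀ k : ℕ, ‖q ^ (k + K + 1) * x‖ ≤ 1 / 2 := by
    intro k; rw [norm_mul, norm_pow]; exact hK k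
  have ht : Multipliable fun k : ℕ => 1 - q ^ (k + K + 1) * x := ⟨_, tail_hasProd hq hK'⟩
  exact ⟨_, HasProd.prod_range_mul (f := fun k : ℕ => 1 - q ^ (k + 1) * x) (k := K) ht.hasProd⟩

lemma A_ne_zero {q x : ℂ} (hq : ‖q‖ < 1) (hx : ∀ k : ℕ, 1 - q ^ (k + 1) * x ≠ 0) :
    Afun q x ≠ 0 := by
  obtain ⟨K, hK⟩ := exists_K hq ‖x‖
  have hK' : ∀ k : ℕ, ‖q ^ (k + K + 1) * x‖ ≤ 1 / 2 := by
    intro k; rw [norm_mul, norm_pow]; exact hK k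
  have ht := tail_hasProd hq hK'
  rw [Afun, ← Multipliable.prod_mul_tprod_nat_mul' (f := fun k : ℕ => 1 - q ^ (k + 1) * x) (k := K)
    ht.multipliable, ht.tprod_eq]
  exact mul_ne_zero (Finset.prod_ne_zero_iff.2 fun k _ => hx k) (Complex.exp_ne_zero _)

lemma diffOn_A {q : ℂ} (hq : ‖q‖ < 1) {R : ℝ} (hR : 0 ≤ R) :
    DifferentiableOn ℂ (Afun q) (Metric.ball 0 R) := by
  obtain ⟨K, hK⟩ := exists_K hq R
  have hb : ∀ (n : ℕ) (x : ℂ), ‖x‖ ≤ R → ‖q ^ (n + K + 1) * x‖ ≤ (1 / 2) * ‖q‖ ^ n := by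
    intro n x hx
    have h1 : ‖q ^ (n + K + 1) * x‖ = ‖q‖ ^ n * (‖q‖ ^ (K + 1) * ‖x‖) := by
      rw [norm_mul, norm_pow]; ring
    have h2 : ‖q‖ ^ (K + 1) * ‖x‖ ≤ ‖q‖ ^ (K + 1) * R :=
      mul_le_mul_of_nonneg_left hx (pow_nonneg (norm_nonneg q) _)
    have h3 : ‖q‖ ^ (K + 1) * R ≤ 1 / 2 := by simpa using hK 0
    have h4 : (0:ℝ) ≤ ‖q‖ ^ n := pow_nonneg (norm_nonneg q) n
    rw [h1]
    nlinarith
  set L : ℕ → ℂ → ℂ := fun n x => Complex.log (1 - q ^ (n + K + 1) * x) with hL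
  have hslit : ∀ (n : ℕ) (x : ℂ), ‖x‖ ≤ R → (1 - q ^ (n + K + 1) * x) ∈ Complex.slitPlane := by
    intro n x hx
    apply Complex.mem_slitPlane_iff.2 (Or.inl ?_)
    have h5 : (q ^ (n + K + 1) * x).re ≤ ‖q ^ (n + K + 1) * x‖ := by
      exact Complex.re_le_norm _
    have h6 := hb n x hx
    have h7 : ‖q‖ ^ n ≤ 1 := pow_le_one₀ (norm_nonneg q) hq.le
    simp only [Complex.sub_re, Complex.one_re]
    nlinarith
  have hLdiff : ∀ n : ℕ, DifferentiableOn ℂ (L n) (Metric.ball 0 R) := by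
    intro n x hx
    have hx' : ‖x‖ ≤ R := by
      rw [Metric.mem_ball, dist_zero_right] at hx; exact hx.le
    exact (((differentiableAt_const (1:ℂ)).sub ((differentiableAt_id).const_mul _)).clog
      (hslit n x hx')).differentiableWithinAt
  have hS : TendstoUniformlyOn (fun N x => ∑ n ∈ Finset.range N, L n x)
      (fun x => ∑' n, L n x) atTop (Metric.ball 0 R) := by
    apply tendstoUniformlyOn_tsum_nat
      (hu := ((summable_geometric_of_lt_one (norm_nonneg q) hq).mul_left (3/4)))
    intro n x hx
    have hx' : ‖x‖ ≤ R := by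
      rw [Metric.mem_ball, dist_zero_right] at hx; exact hx.le
    have h2 : ‖Complex.log (1 - q ^ (n + K + 1) * x)‖ ≤ (3 / 2) * ‖q ^ (n + K + 1) * x‖ := by
      have := Complex.norm_log_one_add_half_le_self (z := -(q ^ (n + K + 1) * x))
        (by simpa using (hb n x hx').trans (by nlinarith [pow_le_one₀ (norm_nonneg q) hq.le (n := n)]))
      simpa [sub_eq_add_neg] using this
    have := hb n x hx'
    calc ‖L n x‖ ≤ (3 / 2) * ‖q ^ (n + K + 1) * x‖ := h2
      _ ≤ (3 / 2) * ((1 / 2) * ‖q‖ ^ n) := by nlinarith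
      _ = 3 / 4 * ‖q‖ ^ n := by ring
  have hSdiff : DifferentiableOn ℂ (fun x => ∑' n, L n x) (Metric.ball 0 R) := by
    apply (hS.tendstoLocallyUniformlyOn).differentiableOn ?_ Metric.isOpen_ball
    exact Filter.Eventually.of_forall fun N =>
      DifferentiableOn.fun_sum fun n _ => hLdiff n
  have heq : ∀ x ∈ Metric.ball (0:ℂ) R,
      Afun q x = (∏ k ∈ Finset.range K, (1 - q ^ (k + 1) * x)) * Complex.exp (∑' n, L n x) := by
    intro x hx
    have hx' : ‖x‖ ≤ R := by
      rw [Metric.mem_ball, dist_zero_right] at hx; exact hx.le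
    have hK' : ∀ k : ℕ, ‖q ^ (k + K + 1) * x‖ ≤ 1 / 2 := by
      intro k
      exact (hb k x hx').trans (by nlinarith [pow_le_one₀ (norm_nonneg q) hq.le (n := k)])
    have ht := tail_hasProd hq hK'
    rw [Afun, ← Multipliable.prod_mul_tprod_nat_mul' (f := fun k : ℕ => 1 - q ^ (k + 1) * x) (k := K)
      ht.multipliable, ht.tprod_eq]
  have hhead : Differentiable ℂ (fun x : ℂ => ∏ k ∈ Finset.range K, (1 - q ^ (k + 1) * x)) := by
    apply Differentiable.fun_finsetProd
    intro i _
    exact (differentiable_const _).sub (differentiable_id.const_mul _)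
  exact DifferentiableOn.congr (hhead.differentiableOn.mul hSdiff.cexp) heq

lemma differentiable_A {q : ℂ} (hq : ‖q‖ < 1) : Differentiable ℂ (Afun q) := by
  intro x₀
  have h := diffOn_A hq (R := ‖x₀‖ + 1) (by positivity)
  exact h.differentiableAt (Metric.isOpen_ball.mem_nhds
    (by rw [Metric.mem_ball, dist_zero_right]; linarith))

lemma multipliable_B {q : ℂ} (hq : ‖q‖ < 1) (x : ℂ) :
    Multipliable fun k : ℕ => 1 - q ^ k * x :=
  ⟨_, HasProd.prod_range_mul (f := fun k : ℕ => 1 - q ^ k * x) (k := 1)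
    (multipliable_A hq x).hasProd⟩

lemma B_eq {q : ℂ} (hq : ‖q‖ < 1) (x : ℂ) :
    ∏' k : ℕ, (1 - q ^ k * x) = (1 - x) * Afun q x := by
  rw [tprod_eq_zero_mul' (f := fun k : ℕ => 1 - q ^ k * x) (multipliable_A hq x)]
  simp [Afun]

lemma A_shift {q : ℂ} (hq : ‖q‖ < 1) (x : ℂ) :
    Afun q x = (1 - q * x) * Afun q (q * x) := by
  have hm : Multipliable fun n : ℕ => 1 - q ^ (n + 1 + 1) * x :=
    (multipliable_A hq (q * x)).congr fun k => by ring_nf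
  rw [Afun, tprod_eq_zero_mul' (f := fun k : ℕ => 1 - q ^ (k + 1) * x) hm]
  congr 1
  · norm_num
  · rw [Afun]
    exact tprod_congr fun k => by ring_nf

lemma A_div_shift {q : ℂ} (hq : ‖q‖ < 1) (hq0 : q ≠ 0) (x : ℂ) :
    Afun q (x / q) = (1 - x) * Afun q x := by
  rw [← B_eq hq x, Afun]
  exact tprod_congr fun k => by
    congr 1
    field_simp
    ring

noncomputable def Ffun (τ v : ℂ) : ℂ :=
  exp (-((π : ℂ) * I * v)) *
    ((1 - exp (2 * (π : ℂ) * I * v)) * Afun (exp (2 * (π : ℂ) * I * τ)) (exp (2 * (π : ℂ) * I * v))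
      * Afun (exp (2 * (π : ℂ) * I * τ)) (exp (-(2 * (π : ℂ) * I * v))))

lemma norm_Q_lt_one {τ : ℂ} (hτ : 0 < τ.im) : ‖exp (2 * (π : ℂ) * I * τ)‖ < 1 := by
  rw [Complex.norm_exp]
  have h : (2 * (π : ℂ) * I * τ).re = -(2 * π * τ.im) := by
    simp [Complex.mul_re, Complex.mul_im]
    try ring
  rw [h]
  have := Real.pi_pos
  apply Real.exp_lt_one_iff.2
  nlinarith

lemma factor_A_ne_zero {q : ℂ} (hq : ‖q‖ < 1) (k : ℕ) : 1 - q ^ (k + 1) * (1:ℂ) ≠ 0 := by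
  apply factor_ne_zero
  rw [norm_mul, norm_pow, norm_one, mul_one]
  exact pow_lt_one₀ (norm_nonneg q) hq (Nat.succ_ne_zero k)

lemma theta_eq {τ : ℂ} (hτ : 0 < τ.im) (v : ℂ) :
    theta v τ = I * exp ((π : ℂ) * I * τ / 4) * Afun (exp (2 * (π : ℂ) * I * τ)) 1 * Ffun τ v := by
  have hq := norm_Q_lt_one hτ
  set q := exp (2 * (π : ℂ) * I * τ) with hqdef
  set Y := exp (2 * (π : ℂ) * I * v) with hYdef
  set Y' := exp (-(2 * (π : ℂ) * I * v)) with hY'def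
  have e : ∏' k : ℕ, ((1 - q ^ (k + 1)) * (1 - q ^ k * Y) * (1 - q ^ (k + 1) * Y'))
      = (Afun q 1) * ((1 - Y) * Afun q Y) * Afun q Y' := by
    rw [tprod_congr (g := fun k : ℕ => ((1 - q ^ (k + 1) * 1) * (1 - q ^ k * Y))
        * (1 - q ^ (k + 1) * Y')) (fun k => by ring),
      Multipliable.tprod_mul ((multipliable_A hq 1).mul (multipliable_B hq Y)) (multipliable_A hq Y'),
      Multipliable.tprod_mul (multipliable_A hq 1) (multipliable_B hq Y), B_eq hq Y]
    rfl
  unfold theta Ffun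
  rw [← hqdef, ← hYdef, ← hY'def, e]
  ring

lemma hasProdDiv {f g : ℕ → ℂ} {a b : ℂ} (hf : HasProd f a) (hg : HasProd g b) (hb : b ≠ 0) :
    HasProd (fun k => f k / g k) (a / b) := by
  have := Filter.Tendsto.div hf hg hb
  simpa [HasProd, Finset.prod_div_distrib, Pi.div_def] using this

lemma Gfun_eq {τ : ℂ} (hτ : 0 < τ.im) (v : ℂ) :
    Gfun v τ = Ffun τ v / (Afun (exp (2 * (π : ℂ) * I * τ)) 1) ^ 2 := by
  have hq := norm_Q_lt_one hτ
  set q := exp (2 * (π : ℂ) * I * τ) with hqdef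
  set Y := exp (2 * (π : ℂ) * I * v) with hYdef
  have hP0 : Afun q 1 ≠ 0 := A_ne_zero hq (factor_A_ne_zero hq)
  have hnum : HasProd (fun k : ℕ => (1 - Y * q ^ k) * (1 - Y⁻¹ * q ^ (k + 1)))
      ((1 - Y) * Afun q Y * Afun q Y⁻¹) := by
    have h1 : HasProd (fun k : ℕ => 1 - q ^ k * Y) ((1 - Y) * Afun q Y) := by
      rw [← B_eq hq Y]; exact (multipliable_B hq Y).hasProd
    have h2 : HasProd (fun k : ℕ => 1 - q ^ (k + 1) * Y⁻¹) (Afun q Y⁻¹) :=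
      (multipliable_A hq Y⁻¹).hasProd
    have h3 := h1.mul h2
    have h4 : (fun k : ℕ => (1 - q ^ k * Y) * (1 - q ^ (k + 1) * Y⁻¹))
        = fun k : ℕ => (1 - Y * q ^ k) * (1 - Y⁻¹ * q ^ (k + 1)) := funext fun k => by ring
    rw [h4, mul_assoc] at h3
    rwa [mul_assoc]
  have hden : HasProd (fun k : ℕ => (1 - q ^ (k + 1)) ^ 2) (Afun q 1 * Afun q 1) := by
    have h1 : HasProd (fun k : ℕ => 1 - q ^ (k + 1) * 1) (Afun q 1) :=
      (multipliable_A hq 1).hasProd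
    have h2 := h1.mul h1
    have h3 : (fun k : ℕ => (1 - q ^ (k + 1) * 1) * (1 - q ^ (k + 1) * 1))
        = fun k : ℕ => (1 - q ^ (k + 1)) ^ 2 := funext fun k => by ring
    rwa [h3] at h2
  have e : ∏' k : ℕ, ((1 - Y * q ^ k) * (1 - Y⁻¹ * q ^ (k + 1)) / (1 - q ^ (k + 1)) ^ 2)
      = ((1 - Y) * Afun q Y * Afun q Y⁻¹) / (Afun q 1 * Afun q 1) :=
    (hasProdDiv hnum hden (mul_ne_zero hP0 hP0)).tprod_eq
  unfold Gfun Ffun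
  rw [← hqdef, ← hYdef, e, Complex.exp_neg (2 * (π : ℂ) * I * v), ← hYdef]
  rw [sq]
  ring

lemma F_zero (τ : ℂ) : Ffun τ 0 = 0 := by unfold Ffun; simp

lemma F_add_one (τ v : ℂ) : Ffun τ (v + 1) = -Ffun τ v := by
  have epi : exp (-((π : ℂ) * I)) = -1 := by
    rw [show -((π : ℂ) * I) = (π : ℂ) * I + ((-1 : ℤ) : ℂ) * (2 * (π : ℂ) * I) by push_cast; ring,
      Complex.exp_add, Complex.exp_int_mul_two_pi_mul_I, Complex.exp_pi_mul_I]
    ring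
  have e2pi : exp (-(2 * (π : ℂ) * I)) = 1 := by
    rw [show -(2 * (π : ℂ) * I) = ((-1 : ℤ) : ℂ) * (2 * (π : ℂ) * I) by push_cast; ring,
      Complex.exp_int_mul_two_pi_mul_I]
  have e1 : exp (-((π : ℂ) * I * (v + 1))) = -exp (-((π : ℂ) * I * v)) := by
    rw [show -((π : ℂ) * I * (v + 1)) = -((π : ℂ) * I * v) + -((π : ℂ) * I) by ring,
      Complex.exp_add, epi]
    ring
  have e2 : exp (2 * (π : ℂ) * I * (v + 1)) = exp (2 * (π : ℂ) * I * v) := by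
    rw [show 2 * (π : ℂ) * I * (v + 1) = 2 * (π : ℂ) * I * v + 2 * (π : ℂ) * I by ring,
      Complex.exp_add, Complex.exp_two_pi_mul_I, mul_one]
  have e3 : exp (-(2 * (π : ℂ) * I * (v + 1))) = exp (-(2 * (π : ℂ) * I * v)) := by
    rw [show -(2 * (π : ℂ) * I * (v + 1)) = -(2 * (π : ℂ) * I * v) + -(2 * (π : ℂ) * I) by ring,
      Complex.exp_add, e2pi, mul_one]
  unfold Ffun
  rw [e1, e2, e3]
  ring

lemma F_add_tau {τ : ℂ} (hτ : 0 < τ.im) (v : ℂ) :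
    Ffun τ (v + τ) = -(exp (-((π : ℂ) * I * τ)) * exp (-(2 * (π : ℂ) * I * v))) * Ffun τ v := by
  have hq := norm_Q_lt_one hτ
  set q := exp (2 * (π : ℂ) * I * τ) with hqdef
  set Y := exp (2 * (π : ℂ) * I * v) with hYdef
  set Y' := exp (-(2 * (π : ℂ) * I * v)) with hY'def
  have e1 : exp (-((π : ℂ) * I * (v + τ))) = exp (-((π : ℂ) * I * v)) * exp (-((π : ℂ) * I * τ)) := by
    rw [← Complex.exp_add]; congr 1; ring
  have e2 : exp (2 * (π : ℂ) * I * (v + τ)) = q * Y := by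
    rw [hqdef, hYdef, ← Complex.exp_add]; congr 1; ring
  have e3 : exp (-(2 * (π : ℂ) * I * (v + τ))) = Y' / q := by
    rw [hqdef, hY'def, ← Complex.exp_sub]; congr 1; ring
  unfold Ffun
  rw [← hqdef, ← hYdef, ← hY'def, e1, e2, e3, A_div_shift hq (Complex.exp_ne_zero _) Y',
    ← A_shift hq Y]
  have hYY' : Y' * Y = 1 := by
    rw [hY'def, hYdef, ← Complex.exp_add]; simp
  linear_combination (-(exp (-((π : ℂ) * I * v)) * exp (-((π : ℂ) * I * τ)) *
    Afun q Y * Afun q Y')) * hYY'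

lemma F_neg {τ : ℂ} (hτ : 0 < τ.im) (v : ℂ) : Ffun τ (-v) = -Ffun τ v := by
  have hq := norm_Q_lt_one hτ
  set q := exp (2 * (π : ℂ) * I * τ) with hqdef
  have e1 : exp (-((π : ℂ) * I * (-v))) = exp ((π : ℂ) * I * v) := by congr 1; ring
  have e2 : exp (2 * (π : ℂ) * I * (-v)) = exp (-(2 * (π : ℂ) * I * v)) := by congr 1; ring
  have e3 : exp (-(2 * (π : ℂ) * I * (-v))) = exp (2 * (π : ℂ) * I * v) := by congr 1; ring
  unfold Ffun
  rw [← hqdef, e1, e2, e3]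
  set Y := exp (2 * (π : ℂ) * I * v) with hYdef
  set Y' := exp (-(2 * (π : ℂ) * I * v)) with hY'def
  set P := exp ((π : ℂ) * I * v) with hPdef
  set E := exp (-((π : ℂ) * I * v)) with hEdef
  have hPE : P * E = 1 := by rw [hPdef, hEdef, ← Complex.exp_add]; simp
  have hY : Y = P * P := by rw [hYdef, hPdef, ← Complex.exp_add]; congr 1; ring
  have hY' : Y' = E * E := by rw [hY'def, hEdef, ← Complex.exp_add]; congr 1; ring
  rw [hY, hY']
  linear_combination (-(P + E) * Afun q (P * P) * Afun q (E * E)) * hPE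

lemma F_add_nat (τ : ℂ) : ∀ (n : ℕ) (v : ℂ), Ffun τ (v + n) = (-1) ^ n * Ffun τ v := by
  intro n
  induction n with
  | zero => intro v; simp
  | succ n ih =>
    intro v
    have h : v + ((n : ℂ) + 1) = (v + n) + 1 := by ring
    push_cast
    rw [h, F_add_one, ih]
    ring

lemma F_add_nat_tau {τ : ℂ} (hτ : 0 < τ.im) : ∀ (n : ℕ) (v : ℂ),
    Ffun τ (v + n * τ) = (-1) ^ n * exp (-((π : ℂ) * I * (n : ℂ) ^ 2 * τ)) *
      exp (-(2 * (π : ℂ) * I * (n : ℂ) * v)) * Ffun τ v := by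
  intro n
  induction n with
  | zero => intro v; simp
  | succ n ih =>
    intro v
    have h : v + ((n : ℕ) + 1 : ℂ) * τ = (v + τ) + (n : ℂ) * τ := by ring
    push_cast
    rw [h, ih (v + τ), F_add_tau hτ v]
    have ecomb : Complex.exp (-((π : ℂ) * I * (n : ℂ) ^ 2 * τ)) *
        Complex.exp (-(2 * (π : ℂ) * I * (n : ℂ) * (v + τ)))
        * (Complex.exp (-((π : ℂ) * I * τ)) * Complex.exp (-(2 * (π : ℂ) * I * v)))
        = Complex.exp (-((π : ℂ) * I * ((n : ℂ) + 1) ^ 2 * τ)) *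
          Complex.exp (-(2 * (π : ℂ) * I * ((n : ℂ) + 1) * v)) := by
      rw [← Complex.exp_add, ← Complex.exp_add, ← Complex.exp_add, ← Complex.exp_add]
      congr 1
      ring
    linear_combination (-(-1 : ℂ) ^ n * Ffun τ v) * ecomb

lemma F_period {τ : ℂ} (hτ : 0 < τ.im) (a b : ℕ) (v : ℂ) :
    Ffun τ (v + a + b * τ) = (-1) ^ (a + b) * exp (-((π : ℂ) * I * (b : ℂ) ^ 2 * τ)) *
      exp (-(2 * (π : ℂ) * I * (b : ℂ) * v)) * Ffun τ v := by
  have h1 : v + (a : ℂ) + (b : ℂ) * τ = (v + (a : ℂ)) + (b : ℂ) * τ := by ring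
  rw [h1, F_add_nat_tau hτ b (v + (a : ℂ)), F_add_nat τ a v]
  have h2 : exp (-(2 * (π : ℂ) * I * (b : ℂ) * (v + (a : ℂ))))
      = exp (-(2 * (π : ℂ) * I * (b : ℂ) * v)) := by
    rw [show -(2 * (π : ℂ) * I * (b : ℂ) * (v + (a : ℂ)))
        = -(2 * (π : ℂ) * I * (b : ℂ) * v) + ((-(b * a : ℤ) : ℤ) : ℂ) * (2 * (π : ℂ) * I) by
      push_cast; ring, Complex.exp_add, Complex.exp_int_mul_two_pi_mul_I, mul_one]
  rw [h2]
  ring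

lemma differentiable_F {τ : ℂ} (hτ : 0 < τ.im) : Differentiable ℂ (Ffun τ) := by
  have hq := norm_Q_lt_one hτ
  have d1 : Differentiable ℂ (fun v : ℂ => exp (-((π : ℂ) * I * v))) :=
    ((differentiable_id.const_mul _).neg).cexp
  have d2 : Differentiable ℂ (fun v : ℂ => exp (2 * (π : ℂ) * I * v)) :=
    (differentiable_id.const_mul _).cexp
  have d3 : Differentiable ℂ (fun v : ℂ => exp (-(2 * (π : ℂ) * I * v))) :=
    ((differentiable_id.const_mul _).neg).cexp
  exact d1.mul ((((differentiable_const _).sub d2).mul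
    ((differentiable_A hq).comp d2)).mul ((differentiable_A hq).comp d3))

lemma differentiable_theta {τ : ℂ} (hτ : 0 < τ.im) :
    Differentiable ℂ (fun v => theta v τ) := by
  have h : (fun v => theta v τ)
      = fun v => (I * exp ((π : ℂ) * I * τ / 4) * Afun (exp (2 * (π : ℂ) * I * τ)) 1) * Ffun τ v :=
    funext fun v => theta_eq hτ v
  rw [h]
  exact (differentiable_F hτ).const_mul _

/-- Lemma 6.3: the contour integral of `θ(mz,τ)/θ(v+mz,τ)·(θ(v+z,τ)/θ(z,τ))^N`
around the simple pole `z₀ = (−v+a+bτ)/m` equals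
`(e^{2πibv}/m)·G(y,q)·(θ(v+z₀,τ)/θ(z₀,τ))^N`. -/
theorem residue_at_pole
    (τ : ℂ) (hτ : 0 < τ.im) (v : ℂ) (m N : ℕ) (hm : 1 ≤ m) (hN : 1 ≤ N)
    (a b : ℕ) (ha : a < m) (hb : b < m) :
    let z₀ : ℂ := (-v + a + b * τ) / m
    theta z₀ τ ≠ 0 → theta (v + z₀) τ ≠ 0 →
      ∀ᶠ ε in nhdsWithin (0 : ℝ) (Set.Ioi 0),
        (∮ z in C(z₀, ε),
            theta ((m : ℂ) * z) τ / theta (v + (m : ℂ) * z) τ *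
              (theta (v + z) τ / theta z τ) ^ N) =
          exp (2 * (Real.pi : ℂ) * I * (b : ℂ) * v) / m * Gfun v τ *
            (theta (v + z₀) τ / theta z₀ τ) ^ N := by
  intro z₀ hθ1 hθ2
  have hm0 : (m : ℂ) ≠ 0 := Nat.cast_ne_zero.2 (by omega)
  have hq := norm_Q_lt_one hτ
  set q := exp (2 * (π : ℂ) * I * τ) with hqdef
  set P := Afun q 1 with hPdef
  have hP0 : P ≠ 0 := A_ne_zero hq (factor_A_ne_zero hq)
  set C := I * exp ((π : ℂ) * I * τ / 4) * P with hCdef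
  have hC0 : C ≠ 0 := mul_ne_zero (mul_ne_zero I_ne_zero (Complex.exp_ne_zero _)) hP0
  have hθeq : ∀ w, theta w τ = C * Ffun τ w := fun w => theta_eq hτ w
  have hz₀ : z₀ = (-v + (a : ℂ) + (b : ℂ) * τ) / m := rfl
  have h2πIm : 2 * (π : ℂ) * I * (m : ℂ) ≠ 0 := by
    apply mul_ne_zero (mul_ne_zero (mul_ne_zero two_ne_zero ?_) I_ne_zero) hm0
    exact Complex.ofReal_ne_zero.2 Real.pi_ne_zero
  -- the pole factor
  set f₀ : ℂ → ℂ := fun z => 1 - Complex.exp (2 * (π : ℂ) * I * ((m : ℂ) * (z - z₀))) with hf₀def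
  have hf₀diff : Differentiable ℂ f₀ := by
    apply (differentiable_const _).sub
    exact (((differentiable_id.sub_const z₀).const_mul ((m : ℂ))).const_mul
      (2 * (π : ℂ) * I)).cexp
  set φ : ℂ → ℂ := dslope f₀ z₀ with hφdef
  have hφdiff : ∀ z, DifferentiableAt ℂ φ z := by
    intro z
    rcases eq_or_ne z z₀ with rfl | hz
    · obtain ⟨p, hp⟩ := (hf₀diff.analyticAt z₀)
      exact hp.has_fpower_series_dslope_fslope.analyticAt.differentiableAt
    · apply (Filter.EventuallyEq.differentiableAt_iff
        (dslope_eventuallyEq_slope_of_ne f₀ hz)).2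
      apply DifferentiableAt.fun_smul
      · exact ((differentiableAt_id.sub_const z₀).inv (sub_ne_zero.2 hz))
      · exact (hf₀diff.differentiableAt).sub_const _
  have hφz₀ : φ z₀ = -(2 * (π : ℂ) * I * (m : ℂ)) := by
    rw [hφdef, dslope_same]
    have h1 : HasDerivAt (fun z : ℂ => 2 * (π : ℂ) * I * ((m : ℂ) * (z - z₀)))
        (2 * (π : ℂ) * I * (m : ℂ)) z₀ := by
      simpa using (((hasDerivAt_id z₀).sub_const z₀).const_mul ((m : ℂ))).const_mul
        (2 * (π : ℂ) * I)
    have h2 := (h1.cexp).const_sub 1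
    have h3 : (Complex.exp (2 * (π : ℂ) * I * ((m : ℂ) * (z₀ - z₀))) * (2 * (π : ℂ) * I * (m : ℂ)))
        = 2 * (π : ℂ) * I * (m : ℂ) := by simp
    rw [h3] at h2
    exact h2.deriv
  have hφ_mul : ∀ z, (z - z₀) * φ z = f₀ z := by
    intro z
    have h := sub_smul_dslope f₀ z₀ z
    rw [smul_eq_mul] at h
    rw [hφdef, h, hf₀def]
    simp
  set H : ℂ → ℂ := fun z =>
    C * (-1) ^ (a + b) * Complex.exp (-((π : ℂ) * I * (b : ℂ) ^ 2 * τ)) *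
      Complex.exp (-(2 * (π : ℂ) * I * (b : ℂ) * ((m : ℂ) * (z - z₀)))) *
      Complex.exp (-((π : ℂ) * I * ((m : ℂ) * (z - z₀)))) *
      (Afun q (Complex.exp (2 * (π : ℂ) * I * ((m : ℂ) * (z - z₀)))) *
        Afun q (Complex.exp (-(2 * (π : ℂ) * I * ((m : ℂ) * (z - z₀)))))) * φ z with hHdef
  have hH : ∀ z, theta (v + (m : ℂ) * z) τ = (z - z₀) * H z := by
    intro z
    have harg : v + (m : ℂ) * z = ((m : ℂ) * (z - z₀)) + (a : ℂ) + (b : ℂ) * τ := by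
      rw [hz₀]; field_simp; ring
    rw [hθeq, harg, F_period hτ a b]
    have hfz : (1 : ℂ) - Complex.exp (2 * (π : ℂ) * I * ((m : ℂ) * (z - z₀)))
        = (z - z₀) * φ z := (hφ_mul z).symm
    unfold Ffun
    rw [← hqdef, hfz]
    simp only [hHdef]
    ring
  have hHz₀ : H z₀ = C * (-1) ^ (a + b) * Complex.exp (-((π : ℂ) * I * (b : ℂ) ^ 2 * τ)) *
      P ^ 2 * -(2 * (π : ℂ) * I * (m : ℂ)) := by
    simp only [hHdef, sub_self, mul_zero, neg_zero, Complex.exp_zero, mul_one, hφz₀, hPdef]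
    ring
  have hH0 : H z₀ ≠ 0 := by
    rw [hHz₀]
    apply mul_ne_zero
    apply mul_ne_zero
    apply mul_ne_zero
    apply mul_ne_zero hC0
    · exact pow_ne_zero _ (neg_ne_zero.2 one_ne_zero)
    · exact Complex.exp_ne_zero _
    · exact pow_ne_zero _ hP0
    · exact neg_ne_zero.2 h2πIm
  have dInner : Differentiable ℂ (fun z : ℂ => (m : ℂ) * (z - z₀)) :=
    (differentiable_id.sub_const z₀).const_mul _
  have dφ : Differentiable ℂ φ := fun z => hφdiff z
  have dE1 : Differentiable ℂ
      (fun z : ℂ => Complex.exp (-(2 * (π : ℂ) * I * (b : ℂ) * ((m : ℂ) * (z - z₀))))) :=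
    ((dInner.const_mul (2 * (π : ℂ) * I * (b : ℂ))).neg).cexp
  have dE2 : Differentiable ℂ
      (fun z : ℂ => Complex.exp (-((π : ℂ) * I * ((m : ℂ) * (z - z₀))))) :=
    ((dInner.const_mul ((π : ℂ) * I)).neg).cexp
  have dA1 : Differentiable ℂ
      (fun z : ℂ => Afun q (Complex.exp (2 * (π : ℂ) * I * ((m : ℂ) * (z - z₀))))) :=
    (differentiable_A hq).comp ((dInner.const_mul (2 * (π : ℂ) * I)).cexp)
  have dA2 : Differentiable ℂ
      (fun z : ℂ => Afun q (Complex.exp (-(2 * (π : ℂ) * I * ((m : ℂ) * (z - z₀)))))) :=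
    (differentiable_A hq).comp (((dInner.const_mul (2 * (π : ℂ) * I)).neg).cexp)
  have hHdiff : Differentiable ℂ H := by
    simp only [hHdef]
    exact ((((((differentiable_const _).mul (differentiable_const _)).mul
      (differentiable_const _)).mul dE1).mul dE2).mul (dA1.mul dA2)).mul dφ
  have hθcont : Continuous (fun z : ℂ => theta z τ) := (differentiable_theta hτ).continuous
  have hHcont : Continuous H := hHdiff.continuous
  have hUopen : IsOpen {z : ℂ | H z ≠ 0 ∧ theta z τ ≠ 0} := by
    apply IsOpen.inter
    · exact isOpen_compl_singleton.preimage hHcont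
    · exact isOpen_compl_singleton.preimage hθcont
  obtain ⟨δ, hδ0, hδsub⟩ := Metric.isOpen_iff.1 hUopen z₀ ⟨hH0, hθ1⟩
  have hmem : Set.Ioo (0:ℝ) (δ/2) ∈ nhdsWithin (0:ℝ) (Set.Ioi 0) :=
    Ioo_mem_nhdsGT_of_mem ⟨le_refl 0, half_pos hδ0⟩
  filter_upwards [hmem] with ε hε
  obtain ⟨hε0, hεδ⟩ := hε
  have hball : Metric.closedBall z₀ ε ⊆ Metric.ball z₀ δ :=
    Metric.closedBall_subset_ball (by linarith)
  set g : ℂ → ℂ := fun z => theta ((m:ℂ)*z) τ * (theta (v+z) τ / theta z τ)^N / H z with hgdef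
  have hgz : ∀ z ∈ Metric.closedBall z₀ ε, DifferentiableAt ℂ g z := by
    intro z hz
    obtain ⟨hzH, hzθ⟩ := hδsub (hball hz)
    have d1 : DifferentiableAt ℂ (fun z : ℂ => theta ((m:ℂ)*z) τ) z :=
      (((differentiable_theta hτ).comp (differentiable_id.const_mul ((m:ℂ)))) z)
    have d2 : DifferentiableAt ℂ (fun z : ℂ => theta (v + z) τ) z :=
      (((differentiable_theta hτ).comp ((differentiable_const v).add differentiable_id)) z)
    simp only [hgdef]
    exact (d1.mul ((d2.div ((differentiable_theta hτ) z) hzθ).pow N)).div (hHdiff z) hzH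
  have hgd : DiffContOnCl ℂ g (Metric.ball z₀ ε) := by
    apply DifferentiableOn.diffContOnCl
    rw [closure_ball z₀ hε0.ne']
    exact fun z hz => (hgz z hz).differentiableWithinAt
  have hcongr : Set.EqOn
      (fun z => theta ((m : ℂ) * z) τ / theta (v + (m : ℂ) * z) τ *
        (theta (v + z) τ / theta z τ) ^ N)
      (fun z => (z - z₀)⁻¹ • g z) (Metric.sphere z₀ ε) := by
    intro z hz
    have hzc : z ∈ Metric.closedBall z₀ ε := Metric.sphere_subset_closedBall hz
    obtain ⟨hzH, hzθ⟩ := hδsub (hball hzc)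
    have hzne : z ≠ z₀ := by
      intro h
      rw [Metric.mem_sphere, h, dist_self] at hz
      exact hε0.ne' hz.symm
    have hsub : z - z₀ ≠ 0 := sub_ne_zero.2 hzne
    simp only [smul_eq_mul, hgdef]
    rw [hH z]
    field_simp [hzθ, hzH, hsub]
    try ring
    try exact Or.inl trivial
  rw [circleIntegral.integral_congr hε0.le hcongr,
    hgd.circleIntegral_sub_inv_smul (Metric.mem_ball_self hε0)]
  have hmz₀ : (m:ℂ) * z₀ = -v + (a:ℂ) + (b:ℂ)*τ := by
    rw [hz₀]; field_simp
  have hthm : theta ((m:ℂ)*z₀) τ = C * ((-1)^(a+b) *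
      Complex.exp (-((π:ℂ)*I*(b:ℂ)^2*τ)) * Complex.exp (2*(π:ℂ)*I*(b:ℂ)*v) *
      (-(Ffun τ v))) := by
    rw [hmz₀, hθeq, F_period hτ a b (-v), F_neg hτ v,
      show -(2*(π:ℂ)*I*(b:ℂ)*(-v)) = 2*(π:ℂ)*I*(b:ℂ)*v by ring]
    try ring
  rw [smul_eq_mul]
  simp only [hgdef]
  rw [hthm, hHz₀, Gfun_eq hτ v, ← hqdef, ← hPdef, hHz₀] at *
  set E1 := Complex.exp (-((π:ℂ)*I*(b:ℂ)^2*τ)) with hE1def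
  set E2 := Complex.exp (2*(π:ℂ)*I*(b:ℂ)*v) with hE2def
  set Fv := Ffun τ v with hFvdef
  set R := theta (v + z₀) τ / theta z₀ τ with hRdef
  have hE1ne : E1 ≠ 0 := by rw [hE1def]; exact Complex.exp_ne_zero _
  have hE2ne : E2 ≠ 0 := by rw [hE2def]; exact Complex.exp_ne_zero _
  have hne1 : ((-1 : ℂ)) ^ (a + b) ≠ 0 := pow_ne_zero _ (by norm_num)
  have hπ : ((π : ℝ) : ℂ) ≠ 0 := Complex.ofReal_ne_zero.2 Real.pi_ne_zero
  clear_value E1 E2 Fv R C P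
  rw [← mul_div_assoc, div_eq_iff hH0]
  field_simp
end
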